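/- arXiv:2002.08141 — 4 statements merged into one kernel-verified Lean document; each statement's English description precedes it below -/
import Mathlib

section
/- Let 0 ≤ λ_i ≤ 1 with λ_1+λ_2 < 1, λ_2+λ_3 < 1 and λ_3+λ_4 < 1, and let the 4-queue path-graph system evolve under the policy π̃_1 defined by: if ζ(t) = (1,1,1,0) then S(t) = (1,0,1,0); else if Q_2(t) > 0 then S(t) = (0,1,0,1); else if Q_3(t) > 0 then S(t) = (1,0,1,0); else S(t) = (1,0,0,1). Then limsup_{T→∞} (1/T) ∑_{t=0}^{T−1} ∑_{i=1}^{4} E[Q_i(t)] < ∞, i.e., π̃_1 is throughput-optimal. -/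
open MeasureTheory ProbabilityTheory Filter
open scoped ENNReal

/-- The policy π̃_1 for the 4-queue path graph: if the occupancy vector is `(1,1,1,0)`
serve `(1,0,1,0)`; else serve `(0,1,0,1)` if queue 2 is nonempty; else serve `(1,0,1,0)`
if queue 3 is nonempty; else serve `(1,0,0,1)`. -/
def piTilde1 (q : Fin 4 → ℕ) : Fin 4 → ℕ :=
  if 0 < q 0 ∧ 0 < q 1 ∧ 0 < q 2 ∧ q 3 = 0 then ![1, 0, 1, 0]
  else if 0 < q 1 then ![0, 1, 0, 1]
  else if 0 < q 2 then ![1, 0, 1, 0]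
  else ![1, 0, 0, 1]

lemma vec_at0 (x y z w : ℕ) : (![x,y,z,w] : Fin 4 → ℕ) 0 = x := rfl
lemma vec_at1 (x y z w : ℕ) : (![x,y,z,w] : Fin 4 → ℕ) 1 = y := rfl
lemma vec_at2 (x y z w : ℕ) : (![x,y,z,w] : Fin 4 → ℕ) 2 = z := rfl
lemma vec_at3 (x y z w : ℕ) : (![x,y,z,w] : Fin 4 → ℕ) 3 = w := rfl

lemma pair_step01 (q q' : Fin 4 → ℕ) (a : Fin 4 → ℕ)
    (h : ∀ i, q' i = q i - piTilde1 q i + a i) :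
    q' 0 + q' 1 = (q 0 + q 1) - 1 + (a 0 + a 1) := by
  have h0 := h 0; have h1 := h 1
  unfold piTilde1 at h0 h1
  split_ifs at h0 h1 <;> simp only [vec_at0, vec_at1] at h0 h1 <;> omega

lemma pair_step12 (q q' : Fin 4 → ℕ) (a : Fin 4 → ℕ)
    (h : ∀ i, q' i = q i - piTilde1 q i + a i) :
    q' 1 + q' 2 = (q 1 + q 2) - 1 + (a 1 + a 2) := by
  have h1 := h 1; have h2 := h 2
  unfold piTilde1 at h1 h2
  split_ifs at h1 h2 <;> simp only [vec_at1, vec_at2] at h1 h2 <;> omega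

lemma serve23_cases (q : Fin 4 → ℕ) :
    (piTilde1 q 3 = 1 ∧ piTilde1 q 2 = 0) ∨
    (piTilde1 q 3 = 0 ∧ piTilde1 q 2 = 1 ∧ 0 < q 2) := by
  unfold piTilde1
  split_ifs with hc1 hc2 hc3 <;> simp only [vec_at2, vec_at3] <;> tauto

lemma lindley_nat (u b : ℕ → ℕ) (h0 : u 0 = 0) (hstep : ∀ t, u (t+1) = u t - 1 + b t) :
    ∀ T, 1 ≤ T → u T ≤ (Finset.range T).sup
      (fun s => (∑ t ∈ Finset.Ico s T, b t) - (T - 1 - s)) := by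
  intro T
  induction T with
  | zero => omega
  | succ T IH =>
    intro _
    rcases Nat.eq_zero_or_pos T with hT | hT
    · subst hT
      have h1 := hstep 0
      refine le_trans ?_ (Finset.le_sup (Finset.self_mem_range_succ 0))
      have hs : ∑ t ∈ Finset.Ico 0 (0+1), b t = b 0 := by simp
      omega
    · obtain ⟨s0, hs0mem, hs0⟩ :=
        Finset.exists_mem_eq_sup (Finset.range T) (Finset.nonempty_range_iff.mpr (by omega))
          (fun s => (∑ t ∈ Finset.Ico s T, b t) - (T - 1 - s))
      have hs0T : s0 < T := Finset.mem_range.mp hs0mem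
      have hle : u T ≤ (∑ t ∈ Finset.Ico s0 T, b t) - (T - 1 - s0) := by
        rw [← hs0]; exact IH hT
      have hrec := hstep T
      rcases le_or_gt (T - s0) (∑ t ∈ Finset.Ico s0 T, b t) with hcase | hcase
      · refine le_trans ?_ (Finset.le_sup (Finset.mem_range.mpr (show s0 < T + 1 by omega)))
        rw [Finset.sum_Ico_succ_top (le_of_lt hs0T)]
        omega
      · refine le_trans ?_ (Finset.le_sup (Finset.self_mem_range_succ T))
        rw [Finset.sum_Ico_succ_top (le_refl T), Finset.Ico_self, Finset.sum_empty]
        omega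

lemma q3_invariant (q : ℕ → Fin 4 → ℕ) (a : Fin 4 → ℕ → ℕ)
    (h0 : ∀ i, q 0 i = 0) (ha : ∀ i t, a i t ≤ 1)
    (hev : ∀ t i, q (t+1) i = q t i - piTilde1 (q t) i + a i t) :
    ∀ T, q T 3 ≤ (Finset.range (T+1)).sup
      (fun s => (1 + q s 2 + ∑ t ∈ Finset.Ico s T, (a 2 t + a 3 t)) - ((T - s) + q T 2)) := by
  intro T
  induction T with
  | zero =>
    refine le_trans ?_ (Finset.le_sup (Finset.self_mem_range_succ 0))
    simp [h0]
  | succ T IH =>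
    obtain ⟨s0, hs0mem, hs0⟩ :=
      Finset.exists_mem_eq_sup (Finset.range (T+1)) (Finset.nonempty_range_iff.mpr (Nat.succ_ne_zero T))
        (fun s => (1 + q s 2 + ∑ t ∈ Finset.Ico s T, (a 2 t + a 3 t)) - ((T - s) + q T 2))
    have hs0T : s0 ≤ T := by have := Finset.mem_range.mp hs0mem; omega
    have hle : q T 3 ≤ (1 + q s0 2 + ∑ t ∈ Finset.Ico s0 T, (a 2 t + a 3 t)) - ((T - s0) + q T 2) := by
      rw [← hs0]; exact IH
    have h3 := hev T 3
    have h2 := hev T 2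
    have ha2 := ha 2 T
    have ha3 := ha 3 T
    have hfall : (1 + q (T+1) 2 + ∑ t ∈ Finset.Ico (T+1) (T+1), (a 2 t + a 3 t))
        - ((T + 1 - (T+1)) + q (T+1) 2) = 1 := by
      rw [Finset.Ico_self, Finset.sum_empty]; omega
    rcases serve23_cases (q T) with ⟨e3, e2⟩ | ⟨e3, e2, hq2⟩ <;>
      rw [e3] at h3 <;> rw [e2] at h2
    · -- S3 = 1, S2 = 0
      rcases le_or_gt ((T - s0) + q T 2 + 1) (1 + q s0 2 + ∑ t ∈ Finset.Ico s0 T, (a 2 t + a 3 t))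
        with hcase | hcase
      · refine le_trans ?_ (Finset.le_sup (Finset.mem_range.mpr (show s0 < T + 2 by omega)))
        rw [Finset.sum_Ico_succ_top (by omega : s0 ≤ T)]
        omega
      · refine le_trans ?_ (Finset.le_sup (Finset.self_mem_range_succ (T+1)))
        rw [hfall]; omega
    · -- S3 = 0, S2 = 1, 0 < q T 2
      rcases le_or_gt ((T - s0) + q T 2) (1 + q s0 2 + ∑ t ∈ Finset.Ico s0 T, (a 2 t + a 3 t))
        with hcase | hcase
      · refine le_trans ?_ (Finset.le_sup (Finset.mem_range.mpr (show s0 < T + 2 by omega)))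
        rw [Finset.sum_Ico_succ_top (by omega : s0 ≤ T)]
        omega
      · refine le_trans ?_ (Finset.le_sup (Finset.self_mem_range_succ (T+1)))
        rw [hfall]; omega

def Qdet (a : ℕ → Fin 4 → ℕ) : ℕ → Fin 4 → ℕ
  | 0 => fun _ => 0
  | (t+1) => fun i => Qdet a t i - piTilde1 (Qdet a t) i + a t i

lemma Qdet_congr (a a' : ℕ → Fin 4 → ℕ) : ∀ t, (∀ s, s < t → a s = a' s) → Qdet a t = Qdet a' t
  | 0, _ => rfl
  | (t+1), h => by
    have IH := Qdet_congr a a' t (fun s hs => h s (by omega))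
    funext i
    show Qdet a t i - piTilde1 (Qdet a t) i + a t i
      = Qdet a' t i - piTilde1 (Qdet a' t) i + a' t i
    rw [IH, h t (by omega)]

section ennreal_lemmas

variable {d : ℝ≥0∞}

lemma cast_mul_le_pow (d : ℝ≥0∞) : ∀ m : ℕ, (m : ℝ≥0∞) * d ≤ (1+d)^m
  | 0 => by simp
  | (m+1) => by
    have IH := cast_mul_le_pow d m
    have h1 : (1:ℝ≥0∞) ≤ (1+d)^m := one_le_pow_of_one_le' (le_add_right le_rfl) m
    calc ((m+1 : ℕ) : ℝ≥0∞) * d = (m : ℝ≥0∞) * d + d := by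
          push_cast; ring
      _ ≤ (1+d)^m + d * (1+d)^m := by
          refine add_le_add IH ?_
          conv_lhs => rw [← mul_one d]
          exact mul_le_mul_right h1 d
      _ = (1+d)^m * (1+d) := by ring
      _ = (1+d)^(m+1) := by rw [pow_succ]

lemma pow_mul_invpow_of_le (hd : d ≠ ⊤) {k x : ℕ} (hkx : k ≤ x) :
    (1+d)^x * ((1+d)⁻¹)^k = (1+d)^(x-k) := by
  have hc0 : (1+d) ≠ 0 := by simp
  have hct : (1+d) ≠ ⊤ := by simp [hd]
  have hcc : (1+d) * (1+d)⁻¹ = 1 := ENNReal.mul_inv_cancel hc0 hct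
  calc (1+d)^x * ((1+d)⁻¹)^k = (1+d)^(x-k) * (1+d)^k * ((1+d)⁻¹)^k := by
        have hxk : x - k + k = x := by omega
        rw [← pow_add, hxk]
    _ = (1+d)^(x-k) * ((1+d) * (1+d)⁻¹)^k := by rw [mul_pow, mul_assoc]
    _ = (1+d)^(x-k) := by rw [hcc, one_pow, mul_one]

lemma cast_nat_sub_le (hd0 : d ≠ 0) (hd : d ≠ ⊤) (x k : ℕ) :
    ((x - k : ℕ) : ℝ≥0∞) ≤ d⁻¹ * ((1+d)^x * ((1+d)⁻¹)^k) := by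
  rcases le_or_gt k x with hkx | hkx
  · rw [pow_mul_invpow_of_le hd hkx]
    have h1 : ((x - k : ℕ) : ℝ≥0∞) * d ≤ (1+d)^(x-k) := cast_mul_le_pow d (x-k)
    calc ((x - k : ℕ) : ℝ≥0∞) = ((x - k : ℕ) : ℝ≥0∞) * d * d⁻¹ := by
          rw [mul_assoc, ENNReal.mul_inv_cancel hd0 hd, mul_one]
      _ ≤ (1+d)^(x-k) * d⁻¹ := mul_le_mul_left h1 _
      _ = d⁻¹ * (1+d)^(x-k) := mul_comm _ _
  · have : x - k = 0 := by omega
    simp [this]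

lemma pow_nat_sub_le (hd : d ≠ ⊤) (x k : ℕ) :
    (1+d)^(x-k) ≤ 1 + (1+d)^x * ((1+d)⁻¹)^k := by
  rcases le_or_gt k x with hkx | hkx
  · rw [pow_mul_invpow_of_le hd hkx]; exact le_add_self
  · have : x - k = 0 := by omega
    simp [this]

end ennreal_lemmas

lemma Q_eq_Qdet {Ω : Type*} (A : Fin 4 → ℕ → Ω → ℕ) (Q : ℕ → Fin 4 → Ω → ℕ)
    (hQ0 : ∀ i ω, Q 0 i ω = 0)
    (hQevol : ∀ t i ω,
      Q (t + 1) i ω = Q t i ω - piTilde1 (fun j => Q t j ω) i + A i t ω) :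
    ∀ t i ω, Q t i ω = Qdet (fun s j => A j s ω) t i := by
  intro t
  induction t with
  | zero => intro i ω; rw [hQ0]; rfl
  | succ t IH =>
    intro i ω
    have hfun : (fun j => Q t j ω) = Qdet (fun s j => A j s ω) t := funext fun j => IH j ω
    rw [hQevol t i ω, IH i ω, hfun]
    rfl

/-- Throughput optimality of π̃_1 for the 4-queue path graph. -/
theorem piTilde1_throughput_optimal
    {Ω : Type*} [MeasurableSpace Ω] (μ : Measure Ω) [IsProbabilityMeasure μ]
    (lam : Fin 4 → ℝ) (hlam : ∀ i, 0 ≤ lam i ∧ lam i ≤ 1)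
    (hcap1 : lam 0 + lam 1 < 1) (hcap2 : lam 1 + lam 2 < 1) (hcap3 : lam 2 + lam 3 < 1)
    (A : Fin 4 → ℕ → Ω → ℕ)
    (hAmeas : ∀ i t, Measurable (A i t))
    (hA01 : ∀ i t ω, A i t ω ≤ 1)
    (hArate : ∀ i t, μ {ω | A i t ω = 1} = ENNReal.ofReal (lam i))
    (hAindep : iIndepFun
      (fun p : Fin 4 × ℕ => fun ω => A p.1 p.2 ω) μ)
    (Q : ℕ → Fin 4 → Ω → ℕ)
    (hQ0 : ∀ i ω, Q 0 i ω = 0)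
    (hQevol : ∀ t i ω,
      Q (t + 1) i ω = Q t i ω - piTilde1 (fun j => Q t j ω) i + A i t ω) :
    limsup (fun T : ℕ =>
        (∑ t ∈ Finset.range T, ∑ i, ∫⁻ ω, (Q t i ω : ℝ≥0∞) ∂μ) / (T : ℝ≥0∞))
      atTop < ⊤ := by
  classical
  set ρ : ℝ := max (lam 0 + lam 1) (max (lam 1 + lam 2) (lam 2 + lam 3)) with hρdef
  have hρ0 : 0 ≤ ρ := le_trans (by linarith [(hlam 0).1, (hlam 1).1]) (le_max_left _ _)
  have hρ1 : ρ < 1 := by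
    rw [hρdef]
    exact max_lt hcap1 (max_lt hcap2 hcap3)
  set δ : ℝ := (1 - ρ)/2 with hδdef
  have hδ0 : 0 < δ := by rw [hδdef]; linarith
  have hδh : δ ≤ 1/2 := by rw [hδdef]; linarith
  have hρδ : ρ = 1 - 2*δ := by rw [hδdef]; ring
  set d : ℝ≥0∞ := ENNReal.ofReal δ with hddef
  set c : ℝ≥0∞ := ENNReal.ofReal (1+δ) with hcdef
  have hcd : c = 1 + d := by
    rw [hcdef, hddef, ENNReal.ofReal_add (by norm_num) hδ0.le, ENNReal.ofReal_one]
  have hd0 : d ≠ 0 := by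
    rw [hddef]; simpa [ENNReal.ofReal_eq_zero] using hδ0
  have hdt : d ≠ ⊤ := ENNReal.ofReal_ne_top
  have hct : c ≠ ⊤ := ENNReal.ofReal_ne_top
  have hc0 : c ≠ 0 := by rw [hcd]; simp
  have hc1 : 1 ≤ c := by rw [hcd]; exact le_add_right le_rfl
  set M : ℝ≥0∞ := ENNReal.ofReal (1 + δ - δ^2) with hMdef
  set rE : ℝ≥0∞ := ENNReal.ofReal ((1 + δ - δ^2)/(1+δ)) with hrdef
  have hrE1 : rE < 1 := by
    rw [hrdef]
    refine ENNReal.ofReal_lt_one.mpr ?_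
    rw [div_lt_one (by linarith)]
    nlinarith
  have hMrc : M = rE * c := by
    rw [hMdef, hrdef, hcdef,
      ← ENNReal.ofReal_mul (div_nonneg (by nlinarith) (by linarith)), div_mul_cancel₀]
    linarith
  have hMc : ∀ k : ℕ, M ^ k * (c⁻¹) ^ k = rE ^ k := by
    intro k
    rw [hMrc, ← mul_pow, mul_assoc, ENNReal.mul_inv_cancel hc0 hct, mul_one]
  have hgeom : ∀ n : ℕ, ∑ s ∈ Finset.range n, rE ^ (n - 1 - s) ≤ (1 - rE)⁻¹ := by
    intro n
    rw [Finset.sum_range_reflect (fun j => rE ^ j) n]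
    refine le_trans (ENNReal.sum_le_tsum _) ?_
    rw [ENNReal.tsum_geometric]
  -- measurability
  have hcast : Measurable (fun n : ℕ => (n : ℝ≥0∞)) := measurable_of_countable _
  have hQmeas : ∀ t i, Measurable (Q t i) := by
    intro t
    induction t with
    | zero =>
      intro i
      have h : Q 0 i = fun _ => 0 := funext (hQ0 i)
      rw [h]; exact measurable_const
    | succ t IH =>
      intro i
      have hv : Measurable (fun ω => (fun j => Q t j ω)) :=
        measurable_pi_lambda _ (fun j => IH j)
      have h : Q (t+1) i = fun ω =>
          (fun p : (Fin 4 → ℕ) × ℕ => p.1 i - piTilde1 p.1 i + p.2)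
            ((fun j => Q t j ω), A i t ω) := funext fun ω => hQevol t i ω
      rw [h]
      exact (measurable_of_countable (fun p : (Fin 4 → ℕ) × ℕ => p.1 i - piTilde1 p.1 i + p.2)).comp (hv.prodMk (hAmeas i t))
  have hctm : ∀ (f : Ω → ℕ), Measurable f → Measurable (fun ω => c ^ (f ω)) :=
    fun f hf => (measurable_of_countable (fun n : ℕ => c ^ n)).comp hf
  -- single-coordinate exponential moment
  have hsingle : ∀ (i : Fin 4) (t : ℕ),
      ∫⁻ ω, c ^ (A i t ω) ∂μ = ENNReal.ofReal (1 + δ * lam i) := by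
    intro i t
    have hps : ∀ ω, c ^ (A i t ω) = ({ω | A i t ω = 1}).indicator (fun _ => d) ω + 1 := by
      intro ω
      rcases Nat.le_one_iff_eq_zero_or_eq_one.mp (hA01 i t ω) with h | h
      · have hnm : ω ∉ {ω | A i t ω = 1} := by simp [h]
        simp [h, Set.indicator_of_notMem hnm]
      · have hmem : ω ∈ {ω | A i t ω = 1} := h
        rw [Set.indicator_of_mem hmem, h, pow_one, hcd, add_comm]
    have hms : MeasurableSet {ω | A i t ω = 1} := hAmeas i t (measurableSet_singleton 1)
    rw [lintegral_congr hps, lintegral_add_right _ measurable_const,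
        lintegral_indicator hms, setLIntegral_const, lintegral_one, measure_univ,
        hArate i t, hddef, ← ENNReal.ofReal_mul hδ0.le, ← ENNReal.ofReal_one,
        ← ENNReal.ofReal_add (mul_nonneg hδ0.le (hlam i).1) (by norm_num), add_comm (δ * lam i)]
  -- same-slot pair bound
  have hpairE : ∀ (i j : Fin 4) (t : ℕ), i ≠ j → lam i + lam j ≤ ρ →
      ∫⁻ ω, c ^ (A i t ω + A j t ω) ∂μ ≤ M := by
    intro i j t hij hsum
    have hmi := hctm _ (hAmeas i t)
    have hmj := hctm _ (hAmeas j t)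
    have hind : IndepFun (fun ω => c ^ A i t ω) (fun ω => c ^ A j t ω) μ := by
      have h1 : ((i, t) : Fin 4 × ℕ) ≠ (j, t) := by simp [hij]
      have h2 := hAindep.indepFun h1
      exact h2.comp (measurable_of_countable (fun n : ℕ => c ^ n))
        (measurable_of_countable (fun n : ℕ => c ^ n))
    have hmul := lintegral_mul_eq_lintegral_mul_lintegral_of_indepFun hmi hmj hind
    simp only [Pi.mul_apply] at hmul
    have h1 : lam i * lam j ≤ 1 := mul_le_one₀ (hlam i).2 (hlam j).1 (hlam j).2
    have h2 : δ * (lam i + lam j) ≤ δ * ρ := mul_le_mul_of_nonneg_left hsum hδ0.le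
    have h3 : δ^2 * (lam i * lam j) ≤ δ^2 * 1 :=
      mul_le_mul_of_nonneg_left h1 (sq_nonneg δ)
    calc ∫⁻ ω, c ^ (A i t ω + A j t ω) ∂μ
        = ∫⁻ ω, c ^ A i t ω * c ^ A j t ω ∂μ := by simp only [pow_add]
      _ = (∫⁻ ω, c ^ A i t ω ∂μ) * ∫⁻ ω, c ^ A j t ω ∂μ := hmul
      _ ≤ M := by
          rw [hsingle i t, hsingle j t, hMdef,
            ← ENNReal.ofReal_mul (by nlinarith [(hlam i).1, hδ0])]
          refine ENNReal.ofReal_le_ofReal ?_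
          nlinarith [h2, h3, hρδ, (hlam i).1, (hlam j).1, hδ0]
  -- independent splitting over disjoint coordinate blocks
  have hres : ∀ P : Finset (Fin 4 × ℕ), Measurable (fun ω (p : P) => A p.1.1 p.1.2 ω) :=
    fun P => measurable_pi_lambda _ (fun p => hAmeas p.1.1 p.1.2)
  have hsplit : ∀ (P P' : Finset (Fin 4 × ℕ)), Disjoint P P' →
      ∀ (F : (P → ℕ) → ℝ≥0∞) (G : (P' → ℕ) → ℝ≥0∞),
      ∫⁻ ω, F (fun p => A p.1.1 p.1.2 ω) * G (fun p => A p.1.1 p.1.2 ω) ∂μ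
        = (∫⁻ ω, F (fun p => A p.1.1 p.1.2 ω) ∂μ)
          * ∫⁻ ω, G (fun p => A p.1.1 p.1.2 ω) ∂μ := by
    intro P P' hPP F G
    have hFm : Measurable (fun ω => F (fun p => A p.1.1 p.1.2 ω)) :=
      (measurable_of_countable F).comp (hres P)
    have hGm : Measurable (fun ω => G (fun p => A p.1.1 p.1.2 ω)) :=
      (measurable_of_countable G).comp (hres P')
    have hind : IndepFun (fun ω => F (fun p => A p.1.1 p.1.2 ω))
        (fun ω => G (fun p => A p.1.1 p.1.2 ω)) μ := by
      have h := hAindep.indepFun_finset P P' hPP (fun p => hAmeas p.1 p.2)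
      exact h.comp (measurable_of_countable F) (measurable_of_countable G)
    have hmul := lintegral_mul_eq_lintegral_mul_lintegral_of_indepFun hFm hGm hind
    simpa only [Pi.mul_apply] using hmul
  -- block sum identity
  have hsum_block : ∀ (i j : Fin 4), i ≠ j → ∀ (s T : ℕ) (ω : Ω),
      ∑ p ∈ ((({i,j} : Finset (Fin 4)) ×ˢ Finset.Ico s T)).attach,
        A (↑p : Fin 4 × ℕ).1 (↑p : Fin 4 × ℕ).2 ω
        = ∑ t ∈ Finset.Ico s T, (A i t ω + A j t ω) := by
    intro i j hij s T ω
    rw [Finset.sum_attach _ (fun q : Fin 4 × ℕ => A q.1 q.2 ω), Finset.sum_product,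
      Finset.sum_pair hij, ← Finset.sum_add_distrib]
  have hblockE : ∀ (i j : Fin 4), i ≠ j → lam i + lam j ≤ ρ → ∀ (s T : ℕ),
      ∫⁻ ω, c ^ (∑ t ∈ Finset.Ico s T, (A i t ω + A j t ω)) ∂μ ≤ M ^ (T - s) := by
    intro i j hij hsum s T
    induction T with
    | zero =>
      rw [Finset.Ico_eq_empty (by omega)]
      simp
    | succ T IH =>
      rcases le_or_gt (T+1) s with hsT | hsT
      · rw [Finset.Ico_eq_empty (by omega)]
        have h0 : T + 1 - s = 0 := by omega
        rw [h0]
        simp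
      · have hs : s ≤ T := by omega
        have hdisj : Disjoint (({i,j} : Finset (Fin 4)) ×ˢ Finset.Ico s T)
            (({i,j} : Finset (Fin 4)) ×ˢ Finset.Ico T (T+1)) := by
          rw [Finset.disjoint_left]
          intro p hp hp'
          rw [Finset.mem_product, Finset.mem_Ico] at hp hp'
          omega
        have hkey := hsplit _ _ hdisj
          (fun v => c ^ ∑ p ∈ (({i,j} : Finset (Fin 4)) ×ˢ Finset.Ico s T).attach, v p)
          (fun v => c ^ ∑ p ∈ (({i,j} : Finset (Fin 4)) ×ˢ Finset.Ico T (T+1)).attach, v p)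
        simp only [hsum_block i j hij s T, hsum_block i j hij T (T+1),
          Nat.Ico_succ_singleton, Finset.sum_singleton] at hkey
        calc ∫⁻ ω, c ^ (∑ t ∈ Finset.Ico s (T+1), (A i t ω + A j t ω)) ∂μ
            = ∫⁻ ω, (c ^ (∑ t ∈ Finset.Ico s T, (A i t ω + A j t ω)))
                * (c ^ (A i T ω + A j T ω)) ∂μ := by
              refine lintegral_congr fun ω => ?_
              rw [Finset.sum_Ico_succ_top hs, pow_add]
          _ = (∫⁻ ω, c ^ (∑ t ∈ Finset.Ico s T, (A i t ω + A j t ω)) ∂μ)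
                * ∫⁻ ω, c ^ (A i T ω + A j T ω) ∂μ := hkey
          _ ≤ M ^ (T - s) * M := mul_le_mul' IH (hpairE i j T hij hsum)
          _ = M ^ (T + 1 - s) := by
              rw [← pow_succ]
              congr 1
              omega
  have hnadd : ∀ (f g : Ω → ℕ), Measurable f → Measurable g →
      Measurable (fun ω => f ω + g ω) := fun f g hf hg =>
    (measurable_of_countable (fun p : ℕ × ℕ => p.1 + p.2)).comp (hf.prodMk hg)
  have hblockmeas : ∀ (i j : Fin 4) (s T : ℕ),
      Measurable (fun ω => ∑ t ∈ Finset.Ico s T, (A i t ω + A j t ω)) := by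
    intro i j s T
    exact Finset.measurable_sum _ (fun t _ => hnadd _ _ (hAmeas i t) (hAmeas j t))
  set Cy : ℝ≥0∞ := 1 + c * (1 - rE)⁻¹ with hCydef
  have hterm : ∀ (k : ℕ), (c⁻¹)^k * M^(k+1) ≤ c * rE^k := by
    intro k
    calc (c⁻¹)^k * M^(k+1) = M^k * (c⁻¹)^k * M := by rw [pow_succ]; ring
      _ = rE^k * M := by rw [hMc]
      _ = rE^k * (rE * c) := by rw [← hMrc]
      _ ≤ rE^k * (1 * c) := by
          refine mul_le_mul_right (mul_le_mul_left hrE1.le c) _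
      _ = c * rE^k := by ring
  have hEQ2 : ∀ s : ℕ, ∫⁻ ω, c ^ (Q s 2 ω) ∂μ ≤ Cy := by
    intro s
    rcases Nat.eq_zero_or_pos s with h0 | hs1
    · subst h0
      have hone : ∀ ω : Ω, (c:ℝ≥0∞) ^ (Q 0 2 ω) = 1 := fun ω => by
        rw [hQ0]; exact pow_zero c
      rw [lintegral_congr hone, lintegral_one, measure_univ, hCydef]
      exact le_self_add
    · have hpoint : ∀ ω, c ^ (Q s 2 ω) ≤ 1 + ∑ r ∈ Finset.range s,
          ((c⁻¹) ^ (s-1-r) * c ^ (∑ t ∈ Finset.Ico r s, (A 1 t ω + A 2 t ω))) := by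
        intro ω
        have hY := lindley_nat (fun t => Q t 1 ω + Q t 2 ω) (fun t => A 1 t ω + A 2 t ω)
          (by show Q 0 1 ω + Q 0 2 ω = 0; rw [hQ0 1 ω, hQ0 2 ω])
          (fun t => pair_step12 (fun j => Q t j ω) (fun j => Q (t+1) j ω) (fun j => A j t ω)
            (fun i2 => hQevol t i2 ω)) s hs1
        obtain ⟨r0, hr0mem, hr0⟩ := Finset.exists_mem_eq_sup (Finset.range s)
          (Finset.nonempty_range_iff.mpr (by omega))
          (fun r => (∑ t ∈ Finset.Ico r s, (A 1 t ω + A 2 t ω)) - (s - 1 - r))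
        have hY' : Q s 1 ω + Q s 2 ω
            ≤ (∑ t ∈ Finset.Ico r0 s, (A 1 t ω + A 2 t ω)) - (s - 1 - r0) := hr0 ▸ hY
        have h1 : Q s 2 ω ≤ (∑ t ∈ Finset.Ico r0 s, (A 1 t ω + A 2 t ω)) - (s-1-r0) := by
          omega
        calc c ^ (Q s 2 ω)
            ≤ c ^ ((∑ t ∈ Finset.Ico r0 s, (A 1 t ω + A 2 t ω)) - (s-1-r0)) :=
              pow_le_pow_right₀ hc1 h1
          _ ≤ 1 + c ^ (∑ t ∈ Finset.Ico r0 s, (A 1 t ω + A 2 t ω)) * (c⁻¹) ^ (s-1-r0) := by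
              have hh := pow_nat_sub_le (d := d) hdt
                (∑ t ∈ Finset.Ico r0 s, (A 1 t ω + A 2 t ω)) (s-1-r0)
              rw [← hcd] at hh
              exact hh
          _ ≤ 1 + ∑ r ∈ Finset.range s,
              ((c⁻¹)^(s-1-r) * c^(∑ t ∈ Finset.Ico r s, (A 1 t ω + A 2 t ω))) := by
              refine add_le_add_right ?_ 1
              rw [mul_comm]
              exact Finset.single_le_sum (f := fun r =>
                (c⁻¹)^(s-1-r) * c^(∑ t ∈ Finset.Ico r s, (A 1 t ω + A 2 t ω)))
                (fun r _ => zero_le) hr0mem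
      calc ∫⁻ ω, c ^ (Q s 2 ω) ∂μ
          ≤ ∫⁻ ω, (1 + ∑ r ∈ Finset.range s,
              ((c⁻¹)^(s-1-r) * c^(∑ t ∈ Finset.Ico r s, (A 1 t ω + A 2 t ω)))) ∂μ :=
            lintegral_mono hpoint
        _ = 1 + ∑ r ∈ Finset.range s,
              (c⁻¹)^(s-1-r) * ∫⁻ ω, c^(∑ t ∈ Finset.Ico r s, (A 1 t ω + A 2 t ω)) ∂μ := by
            rw [lintegral_add_left measurable_const, lintegral_one, measure_univ,
              lintegral_finset_sum _
                (fun r _ => ((hctm _ (hblockmeas 1 2 r s)).const_mul _))]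
            congr 1
            exact Finset.sum_congr rfl fun r _ =>
              lintegral_const_mul _ (hctm _ (hblockmeas 1 2 r s))
        _ ≤ 1 + ∑ r ∈ Finset.range s, (c⁻¹)^(s-1-r) * M^(s-r) := by
            refine add_le_add_right (Finset.sum_le_sum fun r _ => ?_) 1
            exact mul_le_mul_right (hblockE 1 2 (by decide) (le_trans (le_max_left _ _)
              (le_max_right _ _)) r s) _
        _ ≤ 1 + ∑ r ∈ Finset.range s, c * rE^(s-1-r) := by
            refine add_le_add_right (Finset.sum_le_sum fun r hr => ?_) 1
            have hk : s - r = (s-1-r) + 1 := by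
              have := Finset.mem_range.mp hr; omega
            rw [hk]
            exact hterm (s-1-r)
        _ = 1 + c * ∑ r ∈ Finset.range s, rE^(s-1-r) := by rw [Finset.mul_sum]
        _ ≤ Cy := by
            rw [hCydef]
            exact add_le_add_right (mul_le_mul_right (hgeom s) c) 1
  set KP : ℝ≥0∞ := d⁻¹ * c * (1 - rE)⁻¹ with hKPdef
  have hpairQ : ∀ (i j : Fin 4), i ≠ j → lam i + lam j ≤ ρ →
      (∀ (t : ℕ) (ω : Ω), Q (t+1) i ω + Q (t+1) j ω
        = (Q t i ω + Q t j ω) - 1 + (A i t ω + A j t ω)) →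
      ∀ T : ℕ, ∫⁻ ω, ((Q T i ω + Q T j ω : ℕ) : ℝ≥0∞) ∂μ ≤ KP := by
    intro i j hij hsum hrec T
    rcases Nat.eq_zero_or_pos T with h0 | hT
    · subst h0
      have hz : ∀ ω : Ω, ((Q 0 i ω + Q 0 j ω : ℕ) : ℝ≥0∞) = 0 := fun ω => by
        rw [hQ0 i ω, hQ0 j ω]; simp
      rw [lintegral_congr hz, lintegral_zero]
      exact zero_le
    · have hpoint : ∀ ω, ((Q T i ω + Q T j ω : ℕ) : ℝ≥0∞)
          ≤ ∑ s ∈ Finset.range T,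
            (((∑ t ∈ Finset.Ico s T, (A i t ω + A j t ω)) - (T-1-s) : ℕ) : ℝ≥0∞) := by
        intro ω
        have hX := lindley_nat (fun t => Q t i ω + Q t j ω) (fun t => A i t ω + A j t ω)
          (by show Q 0 i ω + Q 0 j ω = 0; rw [hQ0 i ω, hQ0 j ω])
          (fun t => hrec t ω) T hT
        have hsupsum : (Finset.range T).sup
            (fun s => (∑ t ∈ Finset.Ico s T, (A i t ω + A j t ω)) - (T-1-s))
            ≤ ∑ s ∈ Finset.range T,
              ((∑ t ∈ Finset.Ico s T, (A i t ω + A j t ω)) - (T-1-s)) :=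
          Finset.sup_le fun s hs => Finset.single_le_sum
            (f := fun r => (∑ t ∈ Finset.Ico r T, (A i t ω + A j t ω)) - (T-1-r))
            (fun r _ => Nat.zero_le _) hs
        calc ((Q T i ω + Q T j ω : ℕ) : ℝ≥0∞)
            ≤ ((∑ s ∈ Finset.range T,
              ((∑ t ∈ Finset.Ico s T, (A i t ω + A j t ω)) - (T-1-s)) : ℕ) : ℝ≥0∞) :=
              Nat.cast_le.mpr (le_trans hX hsupsum)
          _ = ∑ s ∈ Finset.range T,
              (((∑ t ∈ Finset.Ico s T, (A i t ω + A j t ω)) - (T-1-s) : ℕ) : ℝ≥0∞) :=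
              Nat.cast_sum _ _
      calc ∫⁻ ω, ((Q T i ω + Q T j ω : ℕ) : ℝ≥0∞) ∂μ
          ≤ ∫⁻ ω, (∑ s ∈ Finset.range T,
              (((∑ t ∈ Finset.Ico s T, (A i t ω + A j t ω)) - (T-1-s) : ℕ) : ℝ≥0∞)) ∂μ :=
            lintegral_mono hpoint
        _ = ∑ s ∈ Finset.range T, ∫⁻ ω,
              (((∑ t ∈ Finset.Ico s T, (A i t ω + A j t ω)) - (T-1-s) : ℕ) : ℝ≥0∞) ∂μ :=
            lintegral_finset_sum _ (fun s _ => hcast.comp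
              ((measurable_of_countable (fun n : ℕ => n - (T-1-s))).comp (hblockmeas i j s T)))
        _ ≤ ∑ s ∈ Finset.range T, d⁻¹ * (c * rE^(T-1-s)) := by
            refine Finset.sum_le_sum fun s hs => ?_
            have hsT : s < T := Finset.mem_range.mp hs
            have hpt : ∀ ω, (((∑ t ∈ Finset.Ico s T, (A i t ω + A j t ω)) - (T-1-s) : ℕ) : ℝ≥0∞)
                ≤ (d⁻¹ * (c⁻¹)^(T-1-s)) * c^(∑ t ∈ Finset.Ico s T, (A i t ω + A j t ω)) := by
              intro ω
              have hh := cast_nat_sub_le hd0 hdt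
                (∑ t ∈ Finset.Ico s T, (A i t ω + A j t ω)) (T-1-s)
              rw [← hcd] at hh
              refine le_trans hh (le_of_eq ?_)
              ring
            calc ∫⁻ ω, (((∑ t ∈ Finset.Ico s T, (A i t ω + A j t ω)) - (T-1-s) : ℕ) : ℝ≥0∞) ∂μ
                ≤ ∫⁻ ω, (d⁻¹ * (c⁻¹)^(T-1-s))
                  * c^(∑ t ∈ Finset.Ico s T, (A i t ω + A j t ω)) ∂μ := lintegral_mono hpt
              _ = (d⁻¹ * (c⁻¹)^(T-1-s))
                  * ∫⁻ ω, c^(∑ t ∈ Finset.Ico s T, (A i t ω + A j t ω)) ∂μ :=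
                  lintegral_const_mul _ (hctm _ (hblockmeas i j s T))
              _ ≤ (d⁻¹ * (c⁻¹)^(T-1-s)) * M^(T-s) :=
                  mul_le_mul_right (hblockE i j hij hsum s T) _
              _ = d⁻¹ * ((c⁻¹)^(T-1-s) * M^(T-s)) := by ring
              _ ≤ d⁻¹ * (c * rE^(T-1-s)) := by
                  refine mul_le_mul_right ?_ _
                  have hk : T - s = (T-1-s) + 1 := by omega
                  rw [hk]
                  exact hterm (T-1-s)
        _ = d⁻¹ * c * ∑ s ∈ Finset.range T, rE^(T-1-s) := by
            rw [Finset.mul_sum]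
            exact Finset.sum_congr rfl fun s _ => by ring
        _ ≤ KP := by
            rw [hKPdef]
            exact mul_le_mul_right (hgeom T) _
  have hX01 : ∀ T : ℕ, ∫⁻ ω, ((Q T 0 ω + Q T 1 ω : ℕ) : ℝ≥0∞) ∂μ ≤ KP :=
    hpairQ 0 1 (by decide) (le_max_left _ _)
      (fun t ω => pair_step01 (fun j => Q t j ω) (fun j => Q (t+1) j ω) (fun j => A j t ω)
        (fun i2 => hQevol t i2 ω))
  have hX12 : ∀ T : ℕ, ∫⁻ ω, ((Q T 1 ω + Q T 2 ω : ℕ) : ℝ≥0∞) ∂μ ≤ KP :=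
    hpairQ 1 2 (by decide) (le_trans (le_max_left _ _) (le_max_right _ _))
      (fun t ω => pair_step12 (fun j => Q t j ω) (fun j => Q (t+1) j ω) (fun j => A j t ω)
        (fun i2 => hQevol t i2 ω))
  set K3 : ℝ≥0∞ := d⁻¹ * c * Cy * (1 - rE)⁻¹ with hK3def
  have hQrep : ∀ (t : ℕ) (i : Fin 4) (ω : Ω), Q t i ω = Qdet (fun s j => A j s ω) t i :=
    Q_eq_Qdet A Q hQ0 hQevol
  have hQ3E : ∀ T : ℕ, ∫⁻ ω, ((Q T 3 ω : ℕ) : ℝ≥0∞) ∂μ ≤ K3 := by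
    intro T
    have hpoint : ∀ ω, ((Q T 3 ω : ℕ) : ℝ≥0∞) ≤ ∑ s ∈ Finset.range (T+1),
        (((1 + Q s 2 ω + ∑ t ∈ Finset.Ico s T, (A 2 t ω + A 3 t ω)) - (T - s) : ℕ) : ℝ≥0∞) := by
      intro ω
      have hinv : Q T 3 ω ≤ (Finset.range (T+1)).sup
          (fun s => (1 + Q s 2 ω + ∑ t ∈ Finset.Ico s T, (A 2 t ω + A 3 t ω))
            - ((T - s) + Q T 2 ω)) :=
        q3_invariant (fun t j => Q t j ω) (fun i2 t => A i2 t ω)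
          (fun i2 => hQ0 i2 ω) (fun i2 t => hA01 i2 t ω) (fun t i2 => hQevol t i2 ω) T
      have hweak : (Finset.range (T+1)).sup
          (fun s => (1 + Q s 2 ω + ∑ t ∈ Finset.Ico s T, (A 2 t ω + A 3 t ω))
            - ((T - s) + Q T 2 ω))
          ≤ ∑ s ∈ Finset.range (T+1),
            ((1 + Q s 2 ω + ∑ t ∈ Finset.Ico s T, (A 2 t ω + A 3 t ω)) - (T - s)) := by
        refine Finset.sup_le fun s hs => ?_
        refine le_trans ?_ (Finset.single_le_sum (f := fun s =>
          (1 + Q s 2 ω + ∑ t ∈ Finset.Ico s T, (A 2 t ω + A 3 t ω)) - (T - s))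
          (fun r _ => Nat.zero_le _) hs)
        show (1 + Q s 2 ω + ∑ t ∈ Finset.Ico s T, (A 2 t ω + A 3 t ω)) - ((T - s) + Q T 2 ω)
          ≤ (1 + Q s 2 ω + ∑ t ∈ Finset.Ico s T, (A 2 t ω + A 3 t ω)) - (T - s)
        omega
      calc ((Q T 3 ω : ℕ) : ℝ≥0∞)
          ≤ ((∑ s ∈ Finset.range (T+1),
            ((1 + Q s 2 ω + ∑ t ∈ Finset.Ico s T, (A 2 t ω + A 3 t ω)) - (T - s)) : ℕ) : ℝ≥0∞) :=
            Nat.cast_le.mpr (le_trans hinv hweak)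
        _ = ∑ s ∈ Finset.range (T+1),
            (((1 + Q s 2 ω + ∑ t ∈ Finset.Ico s T, (A 2 t ω + A 3 t ω)) - (T - s) : ℕ) : ℝ≥0∞) :=
            Nat.cast_sum _ _
    have hmeas3 : ∀ s : ℕ, Measurable (fun ω =>
        (((1 + Q s 2 ω + ∑ t ∈ Finset.Ico s T, (A 2 t ω + A 3 t ω)) - (T - s) : ℕ) : ℝ≥0∞)) := by
      intro s
      have m1 : Measurable (fun ω => 1 + Q s 2 ω + ∑ t ∈ Finset.Ico s T, (A 2 t ω + A 3 t ω)) :=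
        hnadd _ _ (hnadd _ _ measurable_const (hQmeas s 2)) (hblockmeas 2 3 s T)
      exact hcast.comp ((measurable_of_countable (fun n : ℕ => n - (T - s))).comp m1)
    calc ∫⁻ ω, ((Q T 3 ω : ℕ) : ℝ≥0∞) ∂μ
        ≤ ∫⁻ ω, (∑ s ∈ Finset.range (T+1),
          (((1 + Q s 2 ω + ∑ t ∈ Finset.Ico s T, (A 2 t ω + A 3 t ω)) - (T - s) : ℕ) : ℝ≥0∞)) ∂μ :=
          lintegral_mono hpoint
      _ = ∑ s ∈ Finset.range (T+1), ∫⁻ ω,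
          (((1 + Q s 2 ω + ∑ t ∈ Finset.Ico s T, (A 2 t ω + A 3 t ω)) - (T - s) : ℕ) : ℝ≥0∞) ∂μ :=
          lintegral_finset_sum _ (fun s _ => hmeas3 s)
      _ ≤ ∑ s ∈ Finset.range (T+1), (d⁻¹ * c * Cy) * rE ^ (T - s) := by
          refine Finset.sum_le_sum fun s hs => ?_
          -- pointwise exponential bound
          have hpt : ∀ ω, (((1 + Q s 2 ω + ∑ t ∈ Finset.Ico s T, (A 2 t ω + A 3 t ω)) - (T - s) : ℕ) : ℝ≥0∞)
              ≤ (d⁻¹ * (c⁻¹)^(T-s) * c)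
                * (c ^ (Q s 2 ω) * c ^ (∑ t ∈ Finset.Ico s T, (A 2 t ω + A 3 t ω))) := by
            intro ω
            have hh := cast_nat_sub_le hd0 hdt
              (1 + Q s 2 ω + ∑ t ∈ Finset.Ico s T, (A 2 t ω + A 3 t ω)) (T-s)
            rw [← hcd] at hh
            refine le_trans hh (le_of_eq ?_)
            rw [pow_add, pow_add, pow_one]
            ring
          -- independence split
          have hdisj : Disjoint ((Finset.univ : Finset (Fin 4)) ×ˢ Finset.range s)
              (({2,3} : Finset (Fin 4)) ×ˢ Finset.Ico s T) := by
            rw [Finset.disjoint_left]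
            intro p hp hp'
            rw [Finset.mem_product, Finset.mem_range] at hp
            rw [Finset.mem_product, Finset.mem_Ico] at hp'
            omega
          have eF : ∀ ω : Ω, Qdet (fun t i2 =>
              if h : ((i2, t) : Fin 4 × ℕ) ∈ ((Finset.univ : Finset (Fin 4)) ×ˢ Finset.range s)
              then A i2 t ω else 0) s 2 = Q s 2 ω := by
            intro ω
            rw [hQrep s 2 ω]
            refine congrFun (Qdet_congr _ _ s fun t' ht' => ?_) 2
            funext i2
            have hm : ((i2, t') : Fin 4 × ℕ) ∈ ((Finset.univ : Finset (Fin 4)) ×ˢ Finset.range s) :=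
              Finset.mem_product.mpr ⟨Finset.mem_univ _, Finset.mem_range.mpr ht'⟩
            rw [dif_pos hm]
          have hkey := hsplit _ _ hdisj
            (fun v : (((Finset.univ : Finset (Fin 4)) ×ˢ Finset.range s : Finset (Fin 4 × ℕ))) → ℕ =>
              c ^ (Qdet (fun t i2 =>
                if h : ((i2, t) : Fin 4 × ℕ) ∈ ((Finset.univ : Finset (Fin 4)) ×ˢ Finset.range s)
                then v ⟨(i2,t), h⟩ else 0) s 2))
            (fun v => c ^ ∑ p ∈ (({2,3} : Finset (Fin 4)) ×ˢ Finset.Ico s T).attach, v p)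
          simp only [hsum_block 2 3 (by decide) s T, eF] at hkey
          calc ∫⁻ ω, (((1 + Q s 2 ω + ∑ t ∈ Finset.Ico s T, (A 2 t ω + A 3 t ω)) - (T - s) : ℕ) : ℝ≥0∞) ∂μ
              ≤ ∫⁻ ω, (d⁻¹ * (c⁻¹)^(T-s) * c)
                * (c ^ (Q s 2 ω) * c ^ (∑ t ∈ Finset.Ico s T, (A 2 t ω + A 3 t ω))) ∂μ :=
                lintegral_mono hpt
            _ = (d⁻¹ * (c⁻¹)^(T-s) * c)
                * ∫⁻ ω, c ^ (Q s 2 ω) * c ^ (∑ t ∈ Finset.Ico s T, (A 2 t ω + A 3 t ω)) ∂μ :=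
                lintegral_const_mul _ ((hctm _ (hQmeas s 2)).mul (hctm _ (hblockmeas 2 3 s T)))
            _ = (d⁻¹ * (c⁻¹)^(T-s) * c)
                * ((∫⁻ ω, c ^ (Q s 2 ω) ∂μ) * ∫⁻ ω, c ^ (∑ t ∈ Finset.Ico s T, (A 2 t ω + A 3 t ω)) ∂μ) := by
                rw [hkey]
            _ ≤ (d⁻¹ * (c⁻¹)^(T-s) * c) * (Cy * M^(T-s)) := by
                refine mul_le_mul_right (mul_le_mul' (hEQ2 s) ?_) _
                exact hblockE 2 3 (by decide) (le_trans (le_max_right _ _) (le_max_right _ _)) s T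
            _ = (d⁻¹ * c * Cy) * (M^(T-s) * (c⁻¹)^(T-s)) := by ring
            _ = (d⁻¹ * c * Cy) * rE^(T-s) := by rw [hMc]
      _ = (d⁻¹ * c * Cy) * ∑ s ∈ Finset.range (T+1), rE ^ (T - s) := by
          rw [Finset.mul_sum]
      _ ≤ K3 := by
          rw [hK3def]
          have h1 : ∑ s ∈ Finset.range (T+1), rE ^ (T - s) ≤ (1 - rE)⁻¹ := by
            have h2 := hgeom (T+1)
            have h3 : ∀ s, T + 1 - 1 - s = T - s := fun s => by omega
            simpa only [h3] using h2
          exact mul_le_mul_right h1 _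
  set K : ℝ≥0∞ := KP + KP + KP + K3 with hKdef
  have hQi : ∀ T : ℕ, (∑ i, ∫⁻ ω, ((Q T i ω : ℕ) : ℝ≥0∞) ∂μ) ≤ K := by
    intro T
    rw [Fin.sum_univ_four, hKdef]
    have h0 : ∫⁻ ω, ((Q T 0 ω : ℕ) : ℝ≥0∞) ∂μ ≤ KP :=
      le_trans (lintegral_mono fun ω => Nat.cast_le.mpr (Nat.le_add_right _ _)) (hX01 T)
    have h1 : ∫⁻ ω, ((Q T 1 ω : ℕ) : ℝ≥0∞) ∂μ ≤ KP :=
      le_trans (lintegral_mono fun ω => Nat.cast_le.mpr (Nat.le_add_left _ _)) (hX01 T)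
    have h2 : ∫⁻ ω, ((Q T 2 ω : ℕ) : ℝ≥0∞) ∂μ ≤ KP :=
      le_trans (lintegral_mono fun ω => Nat.cast_le.mpr (Nat.le_add_left _ _)) (hX12 T)
    exact add_le_add (add_le_add (add_le_add h0 h1) h2) (hQ3E T)
  have havg : ∀ T : ℕ,
      (∑ t ∈ Finset.range T, ∑ i, ∫⁻ ω, ((Q t i ω : ℕ) : ℝ≥0∞) ∂μ) / (T : ℝ≥0∞) ≤ K := by
    intro T
    refine ENNReal.div_le_of_le_mul ?_
    calc ∑ t ∈ Finset.range T, ∑ i, ∫⁻ ω, ((Q t i ω : ℕ) : ℝ≥0∞) ∂μ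
        ≤ ∑ t ∈ Finset.range T, K := Finset.sum_le_sum fun t _ => hQi t
      _ = K * T := by rw [Finset.sum_const, Finset.card_range, nsmul_eq_mul, mul_comm]
  have h1r : (1 : ℝ≥0∞) - rE ≠ 0 := by
    intro h
    rw [tsub_eq_zero_iff_le] at h
    exact absurd h (not_le.mpr hrE1)
  have hdinv : d⁻¹ ≠ ⊤ := ENNReal.inv_ne_top.mpr hd0
  have hrinv : (1 - rE)⁻¹ ≠ ⊤ := ENNReal.inv_ne_top.mpr h1r
  have hKPt : KP ≠ ⊤ := by
    rw [hKPdef]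
    exact ENNReal.mul_ne_top (ENNReal.mul_ne_top hdinv hct) hrinv
  have hCyt : Cy ≠ ⊤ := by
    rw [hCydef]
    exact ENNReal.add_ne_top.mpr ⟨ENNReal.one_ne_top, ENNReal.mul_ne_top hct hrinv⟩
  have hK3t : K3 ≠ ⊤ := by
    rw [hK3def]
    exact ENNReal.mul_ne_top (ENNReal.mul_ne_top (ENNReal.mul_ne_top hdinv hct) hCyt) hrinv
  have hKt : K < ⊤ := by
    rw [hKdef, lt_top_iff_ne_top]
    exact ENNReal.add_ne_top.mpr
      ⟨ENNReal.add_ne_top.mpr ⟨ENNReal.add_ne_top.mpr ⟨hKPt, hKPt⟩, hKPt⟩, hK3t⟩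
  exact lt_of_le_of_lt
    (limsup_le_of_le (by isBoundedDefault) (Eventually.of_forall havg)) hKt
end

section
/- Fix γ ∈ (0,1] and let U(t), t ≥ 0, be i.i.d. {0,1}-valued with P(U(t) = 1) = γ, independent of the arrival process. Let the 3-queue path-graph system evolve under the randomized policy ρ_γ: if ζ(t) ∈ {(1,1,1), (1,0,1)} then S(t) = (1,0,1); if ζ(t) ∈ {(1,1,0), (0,1,1)} then S(t) = (0,1,0) when U(t) = 1 and S(t) = (1,0,1) when U(t) = 0; otherwise S(t) = ζ(t). If λ ∈ [0,1]^3 satisfies λ_1 + λ_2 < γ and λ_2 + λ_3 < γ, then limsup_{T→∞} (1/T) ∑_{t=0}^{T−1} ∑_{i=1}^{3} E[Q_i(t)] < ∞; that is, ρ_γ stabilizes every rate vector in Λ_γ = {λ : λ_1+λ_2 < γ, λ_2+λ_3 < γ}. -/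
open MeasureTheory ProbabilityTheory Filter
open scoped ENNReal

/-- The randomized policy ρ_γ for the 3-queue path graph, as a function of the queue-length
vector `q` and the coin `u`: if queues 1 and 3 are both nonempty (occupancies `(1,1,1)` or
`(1,0,1)`), serve `(1,0,1)`; if the occupancy is `(1,1,0)` or `(0,1,1)`, serve `(0,1,0)` when
`u = 1` and `(1,0,1)` when `u = 0`; otherwise serve the occupancy vector itself. -/
def rhoPolicy (q : Fin 3 → ℕ) (u : ℕ) : Fin 3 → ℕ :=
  if 0 < q 0 ∧ 0 < q 2 then ![1, 0, 1]
  else if (0 < q 0 ∧ 0 < q 1 ∧ q 2 = 0) ∨ (q 0 = 0 ∧ 0 < q 1 ∧ 0 < q 2) then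
    (if u = 1 then ![0, 1, 0] else ![1, 0, 1])
  else fun i => if 0 < q i then 1 else 0

lemma rho_serve01 (q : Fin 3 → ℕ) {u : ℕ} (hu : u ≤ 1) :
    (q 0 - rhoPolicy q u 0) + (q 1 - rhoPolicy q u 1) ≤ q 0 + q 1 - u := by
  have e2 : ∀ a b c : ℕ, ![a, b, c] 2 = c := fun _ _ _ => rfl
  by_cases h0 : 0 < q 0 <;> by_cases h1 : 0 < q 1 <;> by_cases h2 : 0 < q 2 <;>
    interval_cases u <;>
    simp_all [rhoPolicy, Matrix.cons_val_zero, Matrix.cons_val_one, Matrix.head_cons, e2] <;>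
    omega

lemma rho_serve12 (q : Fin 3 → ℕ) {u : ℕ} (hu : u ≤ 1) :
    (q 1 - rhoPolicy q u 1) + (q 2 - rhoPolicy q u 2) ≤ q 1 + q 2 - u := by
  have e2 : ∀ a b c : ℕ, ![a, b, c] 2 = c := fun _ _ _ => rfl
  by_cases h0 : 0 < q 0 <;> by_cases h1 : 0 < q 1 <;> by_cases h2 : 0 < q 2 <;>
    interval_cases u <;>
    simp_all [rhoPolicy, Matrix.cons_val_zero, Matrix.cons_val_one, Matrix.head_cons, e2] <;>
    omega

lemma nat_drift {w w' u b : ℕ} (h1 : w' ≤ w - u) (hu : u ≤ 1) (hb : b ≤ 2) :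
    (w' + b) ^ 2 + 2 * (w * u) ≤ w ^ 2 + 2 * (w * b) + 9 := by
  rcases le_or_gt u w with h | h
  · obtain ⟨d, rfl⟩ : ∃ d, w = d + u := ⟨w - u, by omega⟩
    have hw' : w' ≤ d := by omega
    nlinarith [sq_nonneg (w' + b), sq_nonneg (d + b)]
  · have hu1 : u = 1 := by omega
    have hw : w = 0 := by omega
    have hw' : w' = 0 := by omega
    subst hu1; subst hw; subst hw'
    nlinarith

/-- deterministic simulation of the queue process from the history of (arrivals, coin). -/
def simQ : (t : ℕ) → (Fin t → (Fin 3 → ℕ) × ℕ) → Fin 3 → ℕ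
  | 0, _ => fun _ => 0
  | t + 1, h => fun i =>
      simQ t (fun s => h s.castSucc) i
        - rhoPolicy (fun j => simQ t (fun s => h s.castSucc) j) (h (Fin.last t)).2 i
        + (h (Fin.last t)).1 i

lemma lintegral_nat_le_one {Ω : Type*} [MeasurableSpace Ω] (μ : Measure Ω)
    {g : Ω → ℕ} (hg : Measurable g) (h1 : ∀ ω, g ω ≤ 1) :
    ∫⁻ ω, (g ω : ℝ≥0∞) ∂μ = μ {ω | g ω = 1} := by
  have hpt : ∀ ω, ((g ω : ℝ≥0∞)) = Set.indicator (g ⁻¹' {1}) (1 : Ω → ℝ≥0∞) ω := by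
    intro ω
    by_cases h : g ω = 1
    · simp [Set.indicator_of_mem, h]
    · have h0 : g ω = 0 := by have := h1 ω; omega
      simp [Set.indicator, h, h0]
  rw [lintegral_congr hpt, lintegral_indicator_one (hg (measurableSet_singleton 1))]
  rfl

/-- For every `γ ∈ (0,1]`, the randomized policy ρ_γ (which breaks inner/outer ties in favor
of the inner queue with probability `γ`, using i.i.d. Bernoulli(γ) coins independent of the
arrivals) stabilizes every rate vector in `Λ_γ = {λ : λ_1+λ_2 < γ, λ_2+λ_3 < γ}`. -/
theorem rho_gamma_stabilizes_Lambda_gamma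
    {Ω : Type*} [MeasurableSpace Ω] (μ : Measure Ω) [IsProbabilityMeasure μ]
    (γ : ℝ) (hγ0 : 0 < γ) (hγ1 : γ ≤ 1)
    (lam : Fin 3 → ℝ) (hlam : ∀ i, 0 ≤ lam i ∧ lam i ≤ 1)
    (hcap1 : lam 0 + lam 1 < γ) (hcap2 : lam 1 + lam 2 < γ)
    (A : Fin 3 → ℕ → Ω → ℕ) (U : ℕ → Ω → ℕ)
    (hAmeas : ∀ i t, Measurable (A i t)) (hUmeas : ∀ t, Measurable (U t))
    (hA01 : ∀ i t ω, A i t ω ≤ 1) (hU01 : ∀ t ω, U t ω ≤ 1)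
    (hArate : ∀ i t, μ {ω | A i t ω = 1} = ENNReal.ofReal (lam i))
    (hUrate : ∀ t, μ {ω | U t ω = 1} = ENNReal.ofReal γ)
    -- the arrival variables and the randomization coins are jointly mutually independent
    (hindep : iIndepFun
      (fun x : (Fin 3 × ℕ) ⊕ ℕ =>
        Sum.elim (fun p : Fin 3 × ℕ => fun ω => A p.1 p.2 ω)
          (fun t => fun ω => U t ω) x) μ)
    (Q : ℕ → Fin 3 → Ω → ℕ)
    (hQ0 : ∀ i ω, Q 0 i ω = 0)
    (hQevol : ∀ t i ω,
      Q (t + 1) i ω = Q t i ω - rhoPolicy (fun j => Q t j ω) (U t ω) i + A i t ω) :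
    limsup (fun T : ℕ =>
        (∑ t ∈ Finset.range T, ∑ i, ∫⁻ ω, (Q t i ω : ℝ≥0∞) ∂μ) / (T : ℝ≥0∞))
      atTop < ⊤ := by
  classical
  set f : (Fin 3 × ℕ) ⊕ ℕ → Ω → ℕ :=
    (fun x : (Fin 3 × ℕ) ⊕ ℕ =>
      Sum.elim (fun p : Fin 3 × ℕ => fun ω => A p.1 p.2 ω) (fun t => fun ω => U t ω) x)
    with hfdef
  have hfmeas : ∀ x, Measurable (f x) := by
    rintro (⟨i, s⟩ | s)
    · exact hAmeas i s
    · exact hUmeas s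
  have hQsim : ∀ (t : ℕ) (ω : Ω) (i : Fin 3),
      Q t i ω = simQ t (fun s => (fun i => A i s ω, U s ω)) i := by
    intro t
    induction t with
    | zero => intro ω i; simp [simQ, hQ0]
    | succ t ih =>
        intro ω i
        rw [hQevol]
        simp only [ih]
        rfl
  have hQvec : ∀ t, Measurable fun ω (i : Fin 3) => Q t i ω := by
    intro t
    have : (fun ω (i : Fin 3) => Q t i ω)
        = (fun h => simQ t h) ∘ (fun ω (s : Fin t) => ((fun i => A i s ω), U s ω)) := by
      funext ω
      exact funext fun i => hQsim t ω i
    rw [this]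
    exact (measurable_of_countable _).comp
      (measurable_pi_lambda _ fun s =>
        ((measurable_pi_lambda _ fun i => hAmeas i s).prodMk (hUmeas s)))
  have hgm : ∀ (t : ℕ) (g : (Fin 3 → ℕ) → ℕ),
      Measurable fun ω => ((g fun i => Q t i ω : ℕ) : ℝ≥0∞) :=
    fun t g => measurable_from_nat.comp ((measurable_of_countable g).comp (hQvec t))
  -- key independence
  have key : ∀ (t : ℕ) (g : (Fin 3 → ℕ) → ℕ) (x : (Fin 3 × ℕ) ⊕ ℕ),
      Sum.elim (fun p : Fin 3 × ℕ => p.2) (fun s => s) x = t →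
      IndepFun (fun ω => g fun i => Q t i ω) (f x) μ := by
    intro t g x hx
    set S : Finset ((Fin 3 × ℕ) ⊕ ℕ) :=
      ((Finset.univ ×ˢ Finset.range t).image Sum.inl) ∪ ((Finset.range t).image Sum.inr)
      with hSdef
    have hdisj : Disjoint S ({x} : Finset _) := by
      rw [Finset.disjoint_singleton_right]
      rcases x with ⟨i, s⟩ | s <;> simp only [Sum.elim_inl, Sum.elim_inr] at hx <;> subst hx <;>
        simp [hSdef]
    have base := hindep.indepFun_finset S {x} hdisj hfmeas
    have hφ : (fun ω => g fun i => Q t i ω) =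
        (fun v : {y // y ∈ S} → ℕ => g (simQ t fun s =>
          ((fun i => v ⟨Sum.inl (i, (s : ℕ)),
              Finset.mem_union_left _ (Finset.mem_image_of_mem _
                (Finset.mem_product.mpr ⟨Finset.mem_univ i, Finset.mem_range.mpr s.isLt⟩))⟩),
           v ⟨Sum.inr (s : ℕ),
              Finset.mem_union_right _ (Finset.mem_image_of_mem _
                (Finset.mem_range.mpr s.isLt))⟩)))
        ∘ (fun ω (y : S) => f y ω) := by
      funext ω
      simp only [Function.comp_apply]
      congr 1
      funext i
      rw [hQsim t ω i]
      rfl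
    have hψ : f x = (fun v : ({x} : Finset ((Fin 3 × ℕ) ⊕ ℕ)) → ℕ =>
        v ⟨x, Finset.mem_singleton_self x⟩) ∘ (fun ω (y : ({x} : Finset _)) => f y ω) := rfl
    rw [hφ, hψ]
    exact base.comp (measurable_of_countable _) (measurable_of_countable _)
  -- product formula
  have hprod : ∀ (t : ℕ) (g : (Fin 3 → ℕ) → ℕ) (x : (Fin 3 × ℕ) ⊕ ℕ),
      Sum.elim (fun p : Fin 3 × ℕ => p.2) (fun s => s) x = t →
      ∫⁻ ω, ((g fun i => Q t i ω : ℕ) : ℝ≥0∞) * ((f x ω : ℕ) : ℝ≥0∞) ∂μ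
        = (∫⁻ ω, ((g fun i => Q t i ω : ℕ) : ℝ≥0∞) ∂μ)
          * ∫⁻ ω, ((f x ω : ℕ) : ℝ≥0∞) ∂μ := by
    intro t g x hx
    have hind : IndepFun (fun ω => ((g fun i => Q t i ω : ℕ) : ℝ≥0∞))
        (fun ω => ((f x ω : ℕ) : ℝ≥0∞)) μ :=
      (key t g x hx).comp measurable_from_nat measurable_from_nat
    have := lintegral_mul_eq_lintegral_mul_lintegral_of_indepFun
      (hgm t g) (measurable_from_nat.comp (hfmeas x)) hind
    simpa [Pi.mul_apply] using this
  -- rates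
  have hEU : ∀ t, ∫⁻ ω, ((U t ω : ℕ) : ℝ≥0∞) ∂μ = ENNReal.ofReal γ := fun t => by
    rw [lintegral_nat_le_one μ (hUmeas t) (hU01 t)]; exact hUrate t
  have hEA : ∀ (i : Fin 3) (t : ℕ),
      ∫⁻ ω, ((A i t ω : ℕ) : ℝ≥0∞) ∂μ = ENNReal.ofReal (lam i) := fun i t => by
    rw [lintegral_nat_le_one μ (hAmeas i t) (hA01 i t)]; exact hArate i t
  have hprodU : ∀ (t : ℕ) (g : (Fin 3 → ℕ) → ℕ),
      ∫⁻ ω, ((g fun i => Q t i ω : ℕ) : ℝ≥0∞) * ((U t ω : ℕ) : ℝ≥0∞) ∂μ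
        = (∫⁻ ω, ((g fun i => Q t i ω : ℕ) : ℝ≥0∞) ∂μ) * ENNReal.ofReal γ :=
    fun t g => (hprod t g (Sum.inr t) rfl).trans
      (congrArg (fun z => (∫⁻ ω, ((g fun i => Q t i ω : ℕ) : ℝ≥0∞) ∂μ) * z) (hEU t))
  have hprodA : ∀ (t : ℕ) (g : (Fin 3 → ℕ) → ℕ) (i' : Fin 3),
      ∫⁻ ω, ((g fun i => Q t i ω : ℕ) : ℝ≥0∞) * ((A i' t ω : ℕ) : ℝ≥0∞) ∂μ
        = (∫⁻ ω, ((g fun i => Q t i ω : ℕ) : ℝ≥0∞) ∂μ) * ENNReal.ofReal (lam i') :=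
    fun t g i' => (hprod t g (Sum.inl (i', t)) rfl).trans
      (congrArg (fun z => (∫⁻ ω, ((g fun i => Q t i ω : ℕ) : ℝ≥0∞) ∂μ) * z) (hEA i' t))
  -- queue growth bound
  have hQle : ∀ (t : ℕ) (i : Fin 3) (ω : Ω), Q t i ω ≤ t := by
    intro t
    induction t with
    | zero => intro i ω; simp [hQ0]
    | succ t ih =>
        intro i ω
        rw [hQevol]
        have := ih i ω
        have := hA01 i t ω
        omega
  -- the drift bound for a pair of queues
  have drift : ∀ (j k : Fin 3),
      (∀ (q : Fin 3 → ℕ) (u : ℕ), u ≤ 1 →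
        (q j - rhoPolicy q u j) + (q k - rhoPolicy q u k) ≤ q j + q k - u) →
      lam j + lam k < γ →
      ∀ T : ℕ, (∑ t ∈ Finset.range T, ∫⁻ ω, ((Q t j ω + Q t k ω : ℕ) : ℝ≥0∞) ∂μ)
        ≤ (9 : ℝ≥0∞) / (2 * ENNReal.ofReal (γ - (lam j + lam k))) * T := by
    intro j k hserve hc T
    set ε : ℝ≥0∞ := ENNReal.ofReal (γ - (lam j + lam k)) with hεdef
    have hε0 : ε ≠ 0 := by
      simp only [hεdef, ne_eq, ENNReal.ofReal_eq_zero, not_le]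
      linarith
    have hεtop : ε ≠ ⊤ := ENNReal.ofReal_ne_top
    set s : ℕ → ℝ≥0∞ := fun t => ∫⁻ ω, ((Q t j ω + Q t k ω : ℕ) : ℝ≥0∞) ∂μ with hsdef
    set e : ℕ → ℝ≥0∞ := fun t => ∫⁻ ω, ((Q t j ω + Q t k ω : ℕ) : ℝ≥0∞) ^ 2 ∂μ with hedef
    have hWm : ∀ t, Measurable fun ω => ((Q t j ω + Q t k ω : ℕ) : ℝ≥0∞) := by
      intro t
      exact hgm t (fun q => q j + q k)
    have hsfin : ∀ t, s t ≠ ⊤ := by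
      intro t
      have hb : s t ≤ ((2 * t : ℕ) : ℝ≥0∞) := by
        rw [hsdef]
        calc ∫⁻ ω, ((Q t j ω + Q t k ω : ℕ) : ℝ≥0∞) ∂μ
            ≤ ∫⁻ _, ((2 * t : ℕ) : ℝ≥0∞) ∂μ := by
              refine lintegral_mono fun ω => Nat.cast_le.mpr ?_
              have := hQle t j ω; have := hQle t k ω; omega
          _ = ((2 * t : ℕ) : ℝ≥0∞) := by simp
      exact (lt_of_le_of_lt hb (ENNReal.natCast_lt_top _)).ne
    have hefin : ∀ t, e t ≠ ⊤ := by
      intro t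
      have hb : e t ≤ (((2 * t) ^ 2 : ℕ) : ℝ≥0∞) := by
        rw [hedef]
        calc ∫⁻ ω, ((Q t j ω + Q t k ω : ℕ) : ℝ≥0∞) ^ 2 ∂μ
            ≤ ∫⁻ _, (((2 * t) ^ 2 : ℕ) : ℝ≥0∞) ∂μ := by
              refine lintegral_mono fun ω => ?_
              have h1 : ((Q t j ω + Q t k ω : ℕ) : ℝ≥0∞) ^ 2
                  = (((Q t j ω + Q t k ω) ^ 2 : ℕ) : ℝ≥0∞) := by push_cast; ring
              rw [h1]
              refine Nat.cast_le.mpr (Nat.pow_le_pow_left ?_ 2)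
              have := hQle t j ω; have := hQle t k ω; omega
          _ = (((2 * t) ^ 2 : ℕ) : ℝ≥0∞) := by simp
      exact (lt_of_le_of_lt hb (ENNReal.natCast_lt_top _)).ne
    have he0 : e 0 = 0 := by
      rw [hedef]
      simp [hQ0]
    -- one-step drift
    have hstep : ∀ t, e (t + 1) + 2 * (s t * ENNReal.ofReal γ)
        ≤ e t + 2 * (s t * ENNReal.ofReal (lam j) + s t * ENNReal.ofReal (lam k)) + 9 := by
      intro t
      have hpt : ∀ ω, ((Q (t+1) j ω + Q (t+1) k ω : ℕ) : ℝ≥0∞) ^ 2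
            + 2 * (((Q t j ω + Q t k ω : ℕ) : ℝ≥0∞) * ((U t ω : ℕ) : ℝ≥0∞))
          ≤ ((Q t j ω + Q t k ω : ℕ) : ℝ≥0∞) ^ 2
            + 2 * (((Q t j ω + Q t k ω : ℕ) : ℝ≥0∞)
                * (((A j t ω : ℕ) : ℝ≥0∞) + ((A k t ω : ℕ) : ℝ≥0∞))) + 9 := by
        intro ω
        have hna : (Q (t+1) j ω + Q (t+1) k ω) ^ 2 + 2 * ((Q t j ω + Q t k ω) * U t ω)
            ≤ (Q t j ω + Q t k ω) ^ 2
              + 2 * ((Q t j ω + Q t k ω) * (A j t ω + A k t ω)) + 9 := by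
          have h1 := hserve (fun i => Q t i ω) (U t ω) (hU01 t ω)
          have hj := hQevol t j ω
          have hk := hQevol t k ω
          have hsum : Q (t+1) j ω + Q (t+1) k ω
              = ((Q t j ω - rhoPolicy (fun i => Q t i ω) (U t ω) j)
                  + (Q t k ω - rhoPolicy (fun i => Q t i ω) (U t ω) k))
                + (A j t ω + A k t ω) := by
            rw [hj, hk]; omega
          rw [hsum]
          exact nat_drift h1 (hU01 t ω)
            (by have := hA01 j t ω; have := hA01 k t ω; omega)
        exact_mod_cast hna
      have hL : ∫⁻ ω, (((Q (t+1) j ω + Q (t+1) k ω : ℕ) : ℝ≥0∞) ^ 2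
            + 2 * (((Q t j ω + Q t k ω : ℕ) : ℝ≥0∞) * ((U t ω : ℕ) : ℝ≥0∞))) ∂μ
          = e (t + 1) + 2 * (s t * ENNReal.ofReal γ) := by
        rw [lintegral_add_left ((hWm (t+1)).pow_const 2),
          lintegral_const_mul 2 (f := fun ω => ((Q t j ω + Q t k ω : ℕ) : ℝ≥0∞) * ((U t ω : ℕ) : ℝ≥0∞)) ((hWm t).mul
            (show Measurable fun ω : Ω => ((U t ω : ℕ) : ℝ≥0∞) from
              measurable_from_nat.comp (hUmeas t)))]
        have h := hprodU t (fun q => q j + q k)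
        simp only [] at h
        rw [h]
      have hR : ∫⁻ ω, (((Q t j ω + Q t k ω : ℕ) : ℝ≥0∞) ^ 2
            + 2 * (((Q t j ω + Q t k ω : ℕ) : ℝ≥0∞)
              * (((A j t ω : ℕ) : ℝ≥0∞) + ((A k t ω : ℕ) : ℝ≥0∞))) + 9) ∂μ
          = e t + 2 * (s t * ENNReal.ofReal (lam j) + s t * ENNReal.ofReal (lam k)) + 9 := by
        have hm2 : Measurable fun ω => 2 * (((Q t j ω + Q t k ω : ℕ) : ℝ≥0∞)
            * (((A j t ω : ℕ) : ℝ≥0∞) + ((A k t ω : ℕ) : ℝ≥0∞))) :=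
          (measurable_const.mul ((hWm t).mul
            ((show Measurable fun ω : Ω => ((A j t ω : ℕ) : ℝ≥0∞) from
                measurable_from_nat.comp (hAmeas j t)).add
              (show Measurable fun ω : Ω => ((A k t ω : ℕ) : ℝ≥0∞) from
                measurable_from_nat.comp (hAmeas k t)))))
        rw [lintegral_add_left (f := fun ω => ((Q t j ω + Q t k ω : ℕ) : ℝ≥0∞) ^ 2 + 2 * (((Q t j ω + Q t k ω : ℕ) : ℝ≥0∞)
              * (((A j t ω : ℕ) : ℝ≥0∞) + ((A k t ω : ℕ) : ℝ≥0∞)))) (((hWm t).pow_const 2).add hm2),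
          lintegral_add_left ((hWm t).pow_const 2),
          lintegral_const_mul 2 (f := fun ω => ((Q t j ω + Q t k ω : ℕ) : ℝ≥0∞)
              * (((A j t ω : ℕ) : ℝ≥0∞) + ((A k t ω : ℕ) : ℝ≥0∞))) ((hWm t).mul
            ((show Measurable fun ω : Ω => ((A j t ω : ℕ) : ℝ≥0∞) from
                measurable_from_nat.comp (hAmeas j t)).add
              (show Measurable fun ω : Ω => ((A k t ω : ℕ) : ℝ≥0∞) from
                measurable_from_nat.comp (hAmeas k t))))]
        have hsplit : ∫⁻ ω, ((Q t j ω + Q t k ω : ℕ) : ℝ≥0∞)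
              * (((A j t ω : ℕ) : ℝ≥0∞) + ((A k t ω : ℕ) : ℝ≥0∞)) ∂μ
            = s t * ENNReal.ofReal (lam j) + s t * ENNReal.ofReal (lam k) := by
          have hmulad : ∀ ω, ((Q t j ω + Q t k ω : ℕ) : ℝ≥0∞)
                * (((A j t ω : ℕ) : ℝ≥0∞) + ((A k t ω : ℕ) : ℝ≥0∞))
              = ((Q t j ω + Q t k ω : ℕ) : ℝ≥0∞) * ((A j t ω : ℕ) : ℝ≥0∞)
                + ((Q t j ω + Q t k ω : ℕ) : ℝ≥0∞) * ((A k t ω : ℕ) : ℝ≥0∞) :=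
            fun ω => mul_add _ _ _
          rw [lintegral_congr hmulad,
            lintegral_add_left (f := fun ω => ((Q t j ω + Q t k ω : ℕ) : ℝ≥0∞) * ((A j t ω : ℕ) : ℝ≥0∞)) ((hWm t).mul
              (show Measurable fun ω : Ω => ((A j t ω : ℕ) : ℝ≥0∞) from
                measurable_from_nat.comp (hAmeas j t)))]
          have hj' := hprodA t (fun q => q j + q k) j
          have hk' := hprodA t (fun q => q j + q k) k
          simp only [] at hj' hk'
          rw [hj', hk']
        rw [hsplit, lintegral_const, measure_univ, mul_one]
      calc e (t + 1) + 2 * (s t * ENNReal.ofReal γ)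
          = _ := hL.symm
        _ ≤ _ := lintegral_mono hpt
        _ = _ := hR
    -- sum over t < T and telescope
    set S' : ℝ≥0∞ := ∑ t ∈ Finset.range T, s t with hS'def
    set P : ℝ≥0∞ := ∑ t ∈ Finset.range T, e t with hPdef
    have hPfin : P ≠ ⊤ := by
      rw [hPdef]
      exact (ENNReal.sum_lt_top.mpr fun t _ => (hefin t).lt_top).ne
    have hS'fin : S' ≠ ⊤ := by
      rw [hS'def]
      exact (ENNReal.sum_lt_top.mpr fun t _ => (hsfin t).lt_top).ne
    have hsum1 : ∑ t ∈ Finset.range T, (e (t + 1) + 2 * (s t * ENNReal.ofReal γ))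
        = (P + e T) + 2 * (S' * ENNReal.ofReal γ) := by
      rw [Finset.sum_add_distrib]
      congr 1
      · have h1 := Finset.sum_range_succ' e T
        have h2 := Finset.sum_range_succ e T
        rw [he0, add_zero] at h1
        rw [← h1, h2]
      · rw [← Finset.mul_sum, ← Finset.sum_mul]
    have hsum2 : ∑ t ∈ Finset.range T,
          (e t + 2 * (s t * ENNReal.ofReal (lam j) + s t * ENNReal.ofReal (lam k)) + 9)
        = P + 2 * (S' * ENNReal.ofReal (lam j) + S' * ENNReal.ofReal (lam k)) + 9 * T := by
      rw [Finset.sum_add_distrib, Finset.sum_add_distrib, Finset.sum_const,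
        Finset.card_range]
      congr 1
      · congr 1
        rw [← Finset.mul_sum, Finset.sum_add_distrib, ← Finset.sum_mul, ← Finset.sum_mul]
      · rw [nsmul_eq_mul, mul_comm]
    have hmain : P + 2 * (S' * ENNReal.ofReal γ)
        ≤ P + (2 * (S' * ENNReal.ofReal (lam j) + S' * ENNReal.ofReal (lam k)) + 9 * T) := by
      have := Finset.sum_le_sum (fun t (_ : t ∈ Finset.range T) => hstep t)
      rw [hsum1, hsum2] at this
      calc P + 2 * (S' * ENNReal.ofReal γ)
          ≤ (P + e T) + 2 * (S' * ENNReal.ofReal γ) := by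
            gcongr
            exact le_add_right le_rfl
        _ ≤ P + 2 * (S' * ENNReal.ofReal (lam j) + S' * ENNReal.ofReal (lam k)) + 9 * T :=
            this
        _ = P + (2 * (S' * ENNReal.ofReal (lam j) + S' * ENNReal.ofReal (lam k)) + 9 * T) := by
            rw [add_assoc]
    have hcancelP : 2 * (S' * ENNReal.ofReal γ)
        ≤ 2 * (S' * ENNReal.ofReal (lam j) + S' * ENNReal.ofReal (lam k)) + 9 * T :=
      (ENNReal.add_le_add_iff_left hPfin).mp hmain
    have hγsplit : ENNReal.ofReal γ
        = (ENNReal.ofReal (lam j) + ENNReal.ofReal (lam k)) + ε := by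
      rw [hεdef, ← ENNReal.ofReal_add (hlam j).1 (hlam k).1,
        ← ENNReal.ofReal_add (by have := (hlam j).1; have := (hlam k).1; linarith)
          (by linarith)]
      congr 1
      ring
    have hX : 2 * (S' * ENNReal.ofReal (lam j) + S' * ENNReal.ofReal (lam k)) ≠ ⊤ := by
      refine ENNReal.mul_ne_top (by simp) (ENNReal.add_ne_top.mpr ⟨?_, ?_⟩) <;>
        exact ENNReal.mul_ne_top hS'fin ENNReal.ofReal_ne_top
    have hkey2 : 2 * (S' * ε) ≤ 9 * T := by
      have hexp : 2 * (S' * ENNReal.ofReal γ)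
          = 2 * (S' * ENNReal.ofReal (lam j) + S' * ENNReal.ofReal (lam k)) + 2 * (S' * ε) := by
        rw [hγsplit, mul_add S', mul_add S', mul_add 2]
      rw [hexp] at hcancelP
      exact (ENNReal.add_le_add_iff_left hX).mp hcancelP
    have hfinal : S' ≤ (9 : ℝ≥0∞) / (2 * ε) * T := by
      have h2ε0 : (2 : ℝ≥0∞) * ε ≠ 0 := by
        simp [hε0]
      have h2εtop : (2 : ℝ≥0∞) * ε ≠ ⊤ := ENNReal.mul_ne_top (by simp) hεtop
      have hS'le : S' ≤ 9 * T / (2 * ε) := by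
        rw [ENNReal.le_div_iff_mul_le (Or.inl h2ε0) (Or.inl h2εtop)]
        calc S' * (2 * ε) = 2 * (S' * ε) := by ring
          _ ≤ 9 * T := hkey2
      calc S' ≤ 9 * T / (2 * ε) := hS'le
        _ = (9 : ℝ≥0∞) / (2 * ε) * T := by
            rw [div_eq_mul_inv, div_eq_mul_inv, mul_right_comm]
    exact hfinal
  -- assemble
  have hQm : ∀ t (i : Fin 3), Measurable fun ω => ((Q t i ω : ℕ) : ℝ≥0∞) :=
    fun t i => measurable_from_nat.comp ((measurable_pi_apply i).comp (hQvec t))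
  set c1 : ℝ≥0∞ := (9 : ℝ≥0∞) / (2 * ENNReal.ofReal (γ - (lam 0 + lam 1))) with hc1def
  set c2 : ℝ≥0∞ := (9 : ℝ≥0∞) / (2 * ENNReal.ofReal (γ - (lam 1 + lam 2))) with hc2def
  have hW1 := drift 0 1 (fun q u hu => rho_serve01 q hu) hcap1
  have hW2 := drift 1 2 (fun q u hu => rho_serve12 q hu) hcap2
  have hbound : ∀ T : ℕ,
      (∑ t ∈ Finset.range T, ∑ i, ∫⁻ ω, (Q t i ω : ℝ≥0∞) ∂μ) ≤ (c1 + c2) * T := by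
    intro T
    have hterm : ∀ t, (∑ i, ∫⁻ ω, (Q t i ω : ℝ≥0∞) ∂μ)
        ≤ ∫⁻ ω, ((Q t 0 ω + Q t 1 ω : ℕ) : ℝ≥0∞) ∂μ
          + ∫⁻ ω, ((Q t 1 ω + Q t 2 ω : ℕ) : ℝ≥0∞) ∂μ := by
      intro t
      have hadd1 : ∫⁻ ω, ((Q t 0 ω + Q t 1 ω : ℕ) : ℝ≥0∞) ∂μ
          = (∫⁻ ω, (Q t 0 ω : ℝ≥0∞) ∂μ) + ∫⁻ ω, (Q t 1 ω : ℝ≥0∞) ∂μ := by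
        simp_rw [Nat.cast_add]
        rw [lintegral_add_left (hQm t 0)]
      have hadd2 : ∫⁻ ω, ((Q t 1 ω + Q t 2 ω : ℕ) : ℝ≥0∞) ∂μ
          = (∫⁻ ω, (Q t 1 ω : ℝ≥0∞) ∂μ) + ∫⁻ ω, (Q t 2 ω : ℝ≥0∞) ∂μ := by
        simp_rw [Nat.cast_add]
        rw [lintegral_add_left (hQm t 1)]
      rw [Fin.sum_univ_three, hadd1, hadd2]
      calc (∫⁻ ω, (Q t 0 ω : ℝ≥0∞) ∂μ) + (∫⁻ ω, (Q t 1 ω : ℝ≥0∞) ∂μ)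
            + ∫⁻ ω, (Q t 2 ω : ℝ≥0∞) ∂μ
          ≤ (∫⁻ ω, (Q t 0 ω : ℝ≥0∞) ∂μ) + (∫⁻ ω, (Q t 1 ω : ℝ≥0∞) ∂μ)
            + ((∫⁻ ω, (Q t 1 ω : ℝ≥0∞) ∂μ) + ∫⁻ ω, (Q t 2 ω : ℝ≥0∞) ∂μ) := by
            gcongr
            exact le_add_self
        _ = _ := by rw [add_assoc]
    calc (∑ t ∈ Finset.range T, ∑ i, ∫⁻ ω, (Q t i ω : ℝ≥0∞) ∂μ)
        ≤ ∑ t ∈ Finset.range T, (∫⁻ ω, ((Q t 0 ω + Q t 1 ω : ℕ) : ℝ≥0∞) ∂μ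
            + ∫⁻ ω, ((Q t 1 ω + Q t 2 ω : ℕ) : ℝ≥0∞) ∂μ) :=
          Finset.sum_le_sum fun t _ => hterm t
      _ = (∑ t ∈ Finset.range T, ∫⁻ ω, ((Q t 0 ω + Q t 1 ω : ℕ) : ℝ≥0∞) ∂μ)
            + ∑ t ∈ Finset.range T, ∫⁻ ω, ((Q t 1 ω + Q t 2 ω : ℕ) : ℝ≥0∞) ∂μ :=
          Finset.sum_add_distrib
      _ ≤ c1 * T + c2 * T := add_le_add (hW1 T) (hW2 T)
      _ = (c1 + c2) * T := (add_mul _ _ _).symm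
  have hratio : ∀ T : ℕ,
      (∑ t ∈ Finset.range T, ∑ i, ∫⁻ ω, (Q t i ω : ℝ≥0∞) ∂μ) / (T : ℝ≥0∞) ≤ c1 + c2 :=
    fun T => ENNReal.div_le_of_le_mul (hbound T)
  have hctop : c1 + c2 < ⊤ := by
    have h1 : c1 < ⊤ := by
      rw [hc1def]
      refine ENNReal.div_lt_top (by simp) ?_
      simp only [ne_eq, mul_eq_zero, ENNReal.ofReal_eq_zero, not_or, not_le]
      exact ⟨by norm_num, by linarith⟩
    have h2 : c2 < ⊤ := by
      rw [hc2def]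
      refine ENNReal.div_lt_top (by simp) ?_
      simp only [ne_eq, mul_eq_zero, ENNReal.ofReal_eq_zero, not_or, not_le]
      exact ⟨by norm_num, by linarith⟩
    exact ENNReal.add_lt_top.mpr ⟨h1, h2⟩
  exact lt_of_le_of_lt
    (limsup_le_of_le (by isBoundedDefault) (Eventually.of_forall hratio)) hctop
end

section
/- Let N ≥ 1, T ≥ 1, and let q(k), k ≥ 0, be an ℕ-valued process on a probability space with q(0) = 0 and q(k+1) = max(q(k) − T, 0) + A(k+1), where for each k the arrival A(k+1) takes values in {0,…,N·T}, is independent of (q(0),…,q(k)), and has mean E[A(k+1)] = Λ·T with Λ < 1. Then for every K ≥ 1, (1/K) ∑_{k=0}^{K−1} E[q(k)] ≤ (N² + 1)·T/(2·(1 − Λ)); in particular the sampled backlog process is strongly stable and its time-averaged expectation grows at most linearly in the frame length T. -/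
open MeasureTheory ProbabilityTheory Filter
open scoped ENNReal

/-- Frame-based scheduling with period-`T` occupancy information (policy ψ_T) in a
collocated network of `N` queues: the sampled backlog `q(k+1) = max(q(k) - T, 0) + A(k+1)`,
with frame arrivals bounded by `N·T`, independent of the past and of mean `Λ·T` with
`Λ < 1`, satisfies `(1/K) ∑_{k<K} E[q(k)] ≤ (N²+1)·T/(2(1-Λ))` for all `K ≥ 1`; in
particular the sampled backlog process is strongly stable and its time-averaged expectation
grows at most linearly in the frame length `T`. -/
theorem frame_based_strong_stability
    {Ω : Type*} [MeasurableSpace Ω] (μ : Measure Ω) [IsProbabilityMeasure μ]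
    (N T : ℕ) (hN : 1 ≤ N) (hT : 1 ≤ T) (Λ : ℝ) (hΛ : Λ < 1)
    (q A : ℕ → Ω → ℕ)
    (hqmeas : ∀ k, Measurable (q k)) (hAmeas : ∀ k, Measurable (A k))
    (hq0 : ∀ ω, q 0 ω = 0)
    (hAbd : ∀ k ω, A (k + 1) ω ≤ N * T)
    (hAindep : ∀ k, IndepFun (A (k + 1))
      (fun ω => fun s : Fin (k + 1) => q (s : ℕ) ω) μ)
    (hAmean : ∀ k, ∫ ω, (A (k + 1) ω : ℝ) ∂μ = Λ * T)
    (hevol : ∀ k ω, q (k + 1) ω = q k ω - T + A (k + 1) ω) :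
    (∀ K : ℕ, 1 ≤ K →
      (∑ k ∈ Finset.range K, ∫⁻ ω, (q k ω : ℝ≥0∞) ∂μ) / (K : ℝ≥0∞)
        ≤ ENNReal.ofReal ((((N : ℝ) ^ 2 + 1) * T) / (2 * (1 - Λ)))) ∧
    limsup (fun K : ℕ =>
        (∑ k ∈ Finset.range K, ∫⁻ ω, (q k ω : ℝ≥0∞) ∂μ) / (K : ℝ≥0∞)) atTop < ⊤ := by
  have hT0 : (0:ℝ) < T := by exact_mod_cast hT
  have hN1 : (1:ℝ) ≤ N := by exact_mod_cast hN
  have h1Λ : (0:ℝ) < 1 - Λ := by linarith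
  -- boundedness of q
  have hqbd : ∀ k ω, q k ω ≤ k * (N * T) := by
    intro k
    induction k with
    | zero => intro ω; simp [hq0 ω]
    | succ k ih =>
      intro ω
      rw [hevol k ω]
      calc q k ω - T + A (k + 1) ω ≤ k * (N * T) + N * T :=
            Nat.add_le_add (le_trans (Nat.sub_le _ _) (ih ω)) (hAbd k ω)
        _ = (k + 1) * (N * T) := by ring
  -- integrability helper
  have hint : ∀ (f : Ω → ℕ) (C : ℕ), Measurable f → (∀ ω, f ω ≤ C) →
      Integrable (fun ω => (f ω : ℝ)) μ := by
    intro f C hm hb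
    refine Integrable.mono' (integrable_const (C : ℝ))
      ((measurable_from_top.comp hm : Measurable fun ω => (f ω : ℝ)).aestronglyMeasurable)
      (ae_of_all _ fun ω => ?_)
    rw [Real.norm_eq_abs, abs_of_nonneg (Nat.cast_nonneg _)]
    exact_mod_cast hb ω
  have hqint : ∀ k, Integrable (fun ω => (q k ω : ℝ)) μ :=
    fun k => hint (q k) (k * (N * T)) (hqmeas k) (hqbd k)
  have hq2int : ∀ k, Integrable (fun ω => ((q k ω : ℝ))^2) μ := by
    intro k
    have := hint (fun ω => q k ω * q k ω) ((k * (N * T)) * (k * (N * T)))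
      ((hqmeas k).mul (hqmeas k)) (fun ω => Nat.mul_le_mul (hqbd k ω) (hqbd k ω))
    simpa [pow_two, Nat.cast_mul] using this
  have hAint : ∀ k, Integrable (fun ω => (A (k+1) ω : ℝ)) μ :=
    fun k => hint (A (k+1)) (N * T) (hAmeas (k+1)) (hAbd k)
  have hAqint : ∀ k, Integrable (fun ω => (A (k+1) ω : ℝ) * (q k ω : ℝ)) μ := by
    intro k
    have := hint (fun ω => A (k+1) ω * q k ω) ((N*T) * (k * (N * T)))
      ((hAmeas (k+1)).mul (hqmeas k))
      (fun ω => Nat.mul_le_mul (hAbd k ω) (hqbd k ω))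
    simpa [Nat.cast_mul] using this
  -- Λ nonneg
  have hΛ0 : 0 ≤ Λ := by
    have h := hAmean 0
    have : 0 ≤ ∫ ω, (A 1 ω : ℝ) ∂μ := integral_nonneg fun ω => Nat.cast_nonneg _
    nlinarith
  -- independence of A (k+1) and q k, as real functions
  have hindep : ∀ k, IndepFun (fun ω => (A (k+1) ω : ℝ)) (fun ω => (q k ω : ℝ)) μ := by
    intro k
    have h := (hAindep k).comp (φ := fun n : ℕ => (n : ℝ))
      (ψ := fun v : Fin (k+1) → ℕ => ((v ⟨k, Nat.lt_succ_self k⟩ : ℕ) : ℝ))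
      measurable_from_top ((measurable_from_top).comp (measurable_pi_apply _))
    exact h
  -- expectation of the product
  have hprod : ∀ k, ∫ ω, (A (k+1) ω : ℝ) * (q k ω : ℝ) ∂μ
      = (Λ * T) * ∫ ω, (q k ω : ℝ) ∂μ := by
    intro k
    have h := (hindep k).integral_mul_eq_mul_integral (hAint k).aestronglyMeasurable
      (hqint k).aestronglyMeasurable
    rw [hAmean k] at h
    simpa [Pi.mul_apply] using h
  -- pointwise drift inequality
  have hpt : ∀ k ω, ((q (k+1) ω : ℝ))^2 ≤ ((q k ω : ℝ))^2 - 2*T*(q k ω : ℝ) + T^2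
      + 2 * ((A (k+1) ω : ℝ) * (q k ω : ℝ)) + (N*T) * (A (k+1) ω : ℝ) := by
    intro k ω
    have hA2 : ((A (k+1) ω : ℝ))^2 ≤ (N*T) * (A (k+1) ω : ℝ) := by
      have := hAbd k ω
      have h1 : ((A (k+1) ω : ℝ)) ≤ (N*T : ℝ) := by exact_mod_cast this
      nlinarith [Nat.cast_nonneg (α := ℝ) (A (k+1) ω)]
    rw [hevol k ω]
    rcases le_or_gt T (q k ω) with h | h
    · rw [Nat.cast_add, Nat.cast_sub h]
      nlinarith [Nat.cast_nonneg (α := ℝ) (A (k+1) ω), Nat.cast_nonneg (α := ℝ) (q k ω),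
        (Nat.cast_le (α := ℝ)).2 h]
    · rw [Nat.sub_eq_zero_of_le h.le]
      have h1 : ((q k ω : ℝ)) ≤ (T : ℝ) := by exact_mod_cast h.le
      simp only [Nat.zero_add]
      nlinarith [Nat.cast_nonneg (α := ℝ) (A (k+1) ω), Nat.cast_nonneg (α := ℝ) (q k ω)]
  -- integrated drift
  have hdrift : ∀ k, ∫ ω, ((q (k+1) ω : ℝ))^2 ∂μ
      ≤ ∫ ω, ((q k ω : ℝ))^2 ∂μ - 2*T*(1-Λ) * ∫ ω, (q k ω : ℝ) ∂μ
        + (T^2 + N*T*(Λ*T)) := by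
    intro k
    have i1 : Integrable (fun ω => ((q k ω : ℝ))^2 - 2*T*(q k ω : ℝ)) μ :=
      (hq2int k).sub ((hqint k).const_mul _)
    have i2 : Integrable (fun ω => ((q k ω : ℝ))^2 - 2*T*(q k ω : ℝ) + (T:ℝ)^2) μ :=
      i1.add (integrable_const _)
    have i3 : Integrable (fun ω => ((q k ω : ℝ))^2 - 2*T*(q k ω : ℝ) + (T:ℝ)^2
        + 2 * ((A (k+1) ω : ℝ) * (q k ω : ℝ))) μ := i2.add ((hAqint k).const_mul _)
    have hrhs : Integrable (fun ω => ((q k ω : ℝ))^2 - 2*T*(q k ω : ℝ) + (T:ℝ)^2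
        + 2 * ((A (k+1) ω : ℝ) * (q k ω : ℝ)) + (N*T) * (A (k+1) ω : ℝ)) μ :=
      i3.add ((hAint k).const_mul _)
    have h1 := integral_mono (hq2int (k+1)) hrhs (fun ω => hpt k ω)
    rw [integral_add i3 ((hAint k).const_mul _),
      integral_add i2 ((hAqint k).const_mul _),
      integral_add i1 (integrable_const _),
      integral_sub (hq2int k) ((hqint k).const_mul _),
      integral_const_mul, integral_const_mul, integral_const_mul,
      hprod k, hAmean k, integral_const] at h1
    simp only [measure_univ, probReal_univ, ENNReal.toReal_one, smul_eq_mul, one_mul] at h1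
    nlinarith [h1]
  -- telescoping
  have htel : ∀ K : ℕ, ∫ ω, ((q K ω : ℝ))^2 ∂μ
      + 2*T*(1-Λ) * ∑ k ∈ Finset.range K, ∫ ω, (q k ω : ℝ) ∂μ
      ≤ K * (T^2 + N*T*(Λ*T)) := by
    intro K
    induction K with
    | zero => simp [hq0]
    | succ K ih =>
      have h := hdrift K
      rw [Finset.sum_range_succ]
      push_cast
      nlinarith [h, ih]
  -- real sum bound
  have hB : 0 ≤ (((N : ℝ) ^ 2 + 1) * T) / (2 * (1 - Λ)) := by positivity
  have hsum : ∀ K : ℕ, ∑ k ∈ Finset.range K, ∫ ω, (q k ω : ℝ) ∂μ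
      ≤ K * ((((N : ℝ) ^ 2 + 1) * T) / (2 * (1 - Λ))) := by
    intro K
    have h := htel K
    have hq2 : 0 ≤ ∫ ω, ((q K ω : ℝ))^2 ∂μ := integral_nonneg fun ω => sq_nonneg _
    have hb : (0:ℝ) < 2*T*(1-Λ) := by positivity
    have hc : (K:ℝ) * (T^2 + N*T*(Λ*T)) ≤ 2*T*(1-Λ) *
        ((K:ℝ) * ((((N : ℝ) ^ 2 + 1) * T) / (2 * (1 - Λ)))) := by
      have key2 : 2*(T:ℝ)*(1-Λ)*((K:ℝ)*(((N:ℝ)^2+1)*(T:ℝ)/(2*(1-Λ)))) =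
          (K:ℝ)*(((N:ℝ)^2+1)*(T:ℝ)^2) := by
        field_simp
      rw [key2]
      have hΛN : Λ * N ≤ (N:ℝ)^2 := by nlinarith
      have h2 : (T:ℝ)^2 + N*T*(Λ*T) ≤ ((N:ℝ)^2+1)*(T:ℝ)^2 := by nlinarith
      exact mul_le_mul_of_nonneg_left h2 (Nat.cast_nonneg K)
    have := le_trans (le_trans (le_add_of_nonneg_left hq2) h) hc
    have := le_of_mul_le_mul_left (by linarith : 2*(T:ℝ)*(1-Λ) *
      (∑ k ∈ Finset.range K, ∫ ω, (q k ω : ℝ) ∂μ) ≤ 2*T*(1-Λ) *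
      ((K:ℝ) * ((((N : ℝ) ^ 2 + 1) * T) / (2 * (1 - Λ))))) hb
    linarith
  -- lintegral = ofReal of integral
  have hlin : ∀ k, ∫⁻ ω, (q k ω : ℝ≥0∞) ∂μ = ENNReal.ofReal (∫ ω, (q k ω : ℝ) ∂μ) := by
    intro k
    rw [ofReal_integral_eq_lintegral_ofReal (hqint k)
      (ae_of_all _ fun ω => Nat.cast_nonneg _)]
    simp [ENNReal.ofReal_natCast]
  have hkey : ∀ K : ℕ, (∑ k ∈ Finset.range K, ∫⁻ ω, (q k ω : ℝ≥0∞) ∂μ) / (K : ℝ≥0∞)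
      ≤ ENNReal.ofReal ((((N : ℝ) ^ 2 + 1) * T) / (2 * (1 - Λ))) := by
    intro K
    rcases Nat.eq_zero_or_pos K with rfl | hK
    · simp
    · have hsumeq : (∑ k ∈ Finset.range K, ∫⁻ ω, (q k ω : ℝ≥0∞) ∂μ)
          = ENNReal.ofReal (∑ k ∈ Finset.range K, ∫ ω, (q k ω : ℝ) ∂μ) := by
        rw [ENNReal.ofReal_sum_of_nonneg
          (fun k _ => integral_nonneg fun ω => Nat.cast_nonneg _)]
        exact Finset.sum_congr rfl fun k _ => hlin k
      rw [hsumeq]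
      refine ENNReal.div_le_of_le_mul ?_
      have : ((K:ℝ≥0∞)) = ENNReal.ofReal (K:ℝ) := by simp
      rw [this, ← ENNReal.ofReal_mul hB]
      apply ENNReal.ofReal_le_ofReal
      rw [mul_comm]
      exact hsum K
  refine ⟨fun K _ => hkey K, ?_⟩
  have hls : limsup (fun K : ℕ =>
      (∑ k ∈ Finset.range K, ∫⁻ ω, (q k ω : ℝ≥0∞) ∂μ) / (K : ℝ≥0∞)) atTop
      ≤ ENNReal.ofReal ((((N : ℝ) ^ 2 + 1) * T) / (2 * (1 - Λ))) :=
    limsup_le_of_le (by isBoundedDefault) (Eventually.of_forall hkey)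
  exact lt_of_le_of_lt hls ENNReal.ofReal_lt_top
end

section
/- Consider the star-of-cliques clique-aggregate model with N ≥ 2 cliques: ℕ-valued backlog processes Q_m(t), 1 ≤ m ≤ N, with Q_m(0) = 0 and Q_m(t+1) = Q_m(t) − D_m(t) + A_m(t+1), where the departures under the inner-clique-priority policy φ_IC are D_1(t) = 1{Q_1(t) > 0} and, for m ≥ 2, D_m(t) = 1{Q_1(t) = 0}·1{Q_m(t) > 0}. Assume that for each t the arrival vector (A_1(t+1),…,A_N(t+1)) is independent of (Q(0),…,Q(t)), has mutually independent components each taking values in {0,…,B} for some fixed B, and E[A_m(t+1)] = λ_m. If λ_1 + λ_m < 1 for every m ∈ {2,…,N}, then limsup_{T→∞} (1/T) ∑_{t=0}^{T−1} ∑_{m=1}^{N} E[Q_m(t)] < ∞; i.e., φ_IC is throughput-optimal for the star-of-cliques network. -/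
open MeasureTheory ProbabilityTheory Filter
open scoped ENNReal

/-- Throughput optimality of the inner-clique-priority policy φ_IC for the star-of-cliques
clique-aggregate model: clique `0` (the inner clique) departs one packet whenever nonempty,
and each peripheral clique `m ≠ 0` departs one packet whenever it is nonempty and the inner
clique is empty. With batch arrivals bounded by `B`, mutually independent across cliques,
independent of the past, of means `λ_m`, and with `λ_0 + λ_m < 1` for every peripheral
clique `m`, the time-averaged total expected backlog has finite limsup. -/
theorem phiIC_throughput_optimal
    {Ω : Type*} [MeasurableSpace Ω] (μ : Measure Ω) [IsProbabilityMeasure μ]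
    (N : ℕ) [NeZero N] (hN : 2 ≤ N) (B : ℕ) (lam : Fin N → ℝ)
    (Q A : ℕ → Fin N → Ω → ℕ)
    (hQmeas : ∀ t m, Measurable (Q t m)) (hAmeas : ∀ t m, Measurable (A t m))
    (hQ0 : ∀ m ω, Q 0 m ω = 0)
    (hAbd : ∀ t m ω, A (t + 1) m ω ≤ B)
    (hAmean : ∀ t m, ∫ ω, (A (t + 1) m ω : ℝ) ∂μ = lam m)
    (hAcomp : ∀ t, iIndepFun (fun m ω => A (t + 1) m ω) μ)
    (hApast : ∀ t, IndepFun (fun ω (m : Fin N) => A (t + 1) m ω)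
      (fun ω (s : Fin (t + 1)) (m : Fin N) => Q (s : ℕ) m ω) μ)
    -- evolution of the inner clique: serve it whenever nonempty
    (hevol0 : ∀ t ω, Q (t + 1) 0 ω
      = Q t 0 ω - (if 0 < Q t 0 ω then 1 else 0) + A (t + 1) 0 ω)
    -- evolution of the peripheral cliques: serve them exactly when the inner clique is empty
    (hevolm : ∀ t (m : Fin N), m ≠ 0 → ∀ ω, Q (t + 1) m ω
      = Q t m ω - (if Q t 0 ω = 0 ∧ 0 < Q t m ω then 1 else 0) + A (t + 1) m ω)
    -- capacity condition
    (hcap : ∀ m : Fin N, m ≠ 0 → lam 0 + lam m < 1) :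
    limsup (fun T : ℕ =>
        (∑ t ∈ Finset.range T, ∑ m, ∫⁻ ω, (Q t m ω : ℝ≥0∞) ∂μ) / (T : ℝ≥0∞))
      atTop < ⊤ := by
  classical
  -- measurability of the real-valued casts
  have hQR : ∀ (t : ℕ) (k : Fin N), Measurable fun ω => (Q t k ω : ℝ) :=
    fun t k => measurable_from_top.comp (hQmeas t k)
  have hAR : ∀ (t : ℕ) (k : Fin N), Measurable fun ω => (A t k ω : ℝ) :=
    fun t k => measurable_from_top.comp (hAmeas t k)
  -- integrability from boundedness
  have hInt : ∀ (g : Ω → ℝ) (c : ℝ), Measurable g → (∀ ω, |g ω| ≤ c) → Integrable g μ := by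
    intro g c hg hb
    exact (integrable_const c).mono' hg.aestronglyMeasurable
      (Eventually.of_forall (fun ω => by simpa [Real.norm_eq_abs] using hb ω))
  -- deterministic bound on the queues
  have hQbd : ∀ (t : ℕ) (k : Fin N) (ω : Ω), Q t k ω ≤ t * B := by
    intro t
    induction t with
    | zero => intro k ω; simp [hQ0]
    | succ t ih =>
      intro k ω
      have hstep : ∀ d : ℕ, Q t k ω - d + A (t + 1) k ω ≤ (t + 1) * B := by
        intro d
        calc Q t k ω - d + A (t + 1) k ω ≤ Q t k ω + A (t + 1) k ω := by omega
          _ ≤ t * B + B := Nat.add_le_add (ih k ω) (hAbd t k ω)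
          _ = (t + 1) * B := by ring
      by_cases hk : k = 0
      · subst hk; rw [hevol0 t ω]; exact hstep _
      · rw [hevolm t k hk ω]; exact hstep _
  have hQRbd : ∀ (t : ℕ) (k : Fin N) (ω : Ω), (Q t k ω : ℝ) ≤ t * B := by
    intro t k ω
    have h : ((Q t k ω : ℕ) : ℝ) ≤ ((t * B : ℕ) : ℝ) := Nat.cast_le.mpr (hQbd t k ω)
    push_cast at h; exact h
  have hQint : ∀ (t : ℕ) (k : Fin N), Integrable (fun ω => (Q t k ω : ℝ)) μ := by
    intro t k
    refine hInt _ (t * B) (hQR t k) (fun ω => ?_)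
    rw [abs_of_nonneg (by positivity)]; exact hQRbd t k ω
  have hAintR : ∀ (t : ℕ) (k : Fin N), Integrable (fun ω => (A (t + 1) k ω : ℝ)) μ := by
    intro t k
    refine hInt _ B (hAR (t + 1) k) (fun ω => ?_)
    rw [abs_of_nonneg (by positivity)]; exact_mod_cast hAbd t k ω
  have hARbd : ∀ (t : ℕ) (k : Fin N) (ω : Ω), (A (t + 1) k ω : ℝ) ≤ B := by
    intro t k ω; exact_mod_cast hAbd t k ω
  -- the key per-peripheral-clique time-average bound
  have key : ∀ m : Fin N, m ≠ 0 → ∀ T : ℕ,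
      ∑ t ∈ Finset.range T, (∫ ω, (Q t 0 ω : ℝ) ∂μ + ∫ ω, (Q t m ω : ℝ) ∂μ)
        ≤ (2 * (B : ℝ) + 1) ^ 2 / (2 * (1 - (lam 0 + lam m))) * T := by
    intro m hm
    have hε : 0 < 1 - (lam 0 + lam m) := by have := hcap m hm; linarith
    set C : ℝ := (2 * (B : ℝ) + 1) ^ 2 with hCdef
    have hC : 0 ≤ C := sq_nonneg _
    have hWmeas : ∀ t : ℕ, Measurable fun ω => ((Q t 0 ω : ℝ) + (Q t m ω : ℝ)) :=
      fun t => (hQR t 0).add (hQR t m)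
    have hWnn : ∀ (t : ℕ) (ω : Ω), (0 : ℝ) ≤ (Q t 0 ω : ℝ) + (Q t m ω : ℝ) :=
      fun t ω => by positivity
    have hWle : ∀ (t : ℕ) (ω : Ω), (Q t 0 ω : ℝ) + (Q t m ω : ℝ) ≤ 2 * t * B := by
      intro t ω
      have h1 := hQRbd t 0 ω
      have h2 := hQRbd t m ω
      linarith
    have hWint : ∀ t : ℕ, Integrable (fun ω => (Q t 0 ω : ℝ) + (Q t m ω : ℝ)) μ :=
      fun t => (hQint t 0).add (hQint t m)
    have hWInn : ∀ t : ℕ, 0 ≤ ∫ ω, ((Q t 0 ω : ℝ) + (Q t m ω : ℝ)) ∂μ :=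
      fun t => integral_nonneg (fun ω => hWnn t ω)
    -- one-step recursion for the aggregated workload, in ℕ
    have hrecN : ∀ (t : ℕ) (ω : Ω),
        Q (t + 1) 0 ω + Q (t + 1) m ω + (if 0 < Q t 0 ω + Q t m ω then 1 else 0)
          = Q t 0 ω + Q t m ω + (A (t + 1) 0 ω + A (t + 1) m ω) := by
      intro t ω
      have h0 := hevol0 t ω
      have h1 := hevolm t m hm ω
      split_ifs at h0 h1 ⊢ <;> omega
    -- in ℝ
    have hrecR : ∀ (t : ℕ) (ω : Ω),
        ((Q (t + 1) 0 ω : ℝ) + (Q (t + 1) m ω : ℝ))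
          = ((Q t 0 ω : ℝ) + (Q t m ω : ℝ))
            - (if 0 < Q t 0 ω + Q t m ω then (1 : ℝ) else 0)
            + ((A (t + 1) 0 ω : ℝ) + (A (t + 1) m ω : ℝ)) := by
      intro t ω
      have h := hrecN t ω
      split_ifs at h ⊢ with hc
      · have h' := congrArg (fun n : ℕ => (n : ℝ)) h
        push_cast at h'; linarith
      · have h' := congrArg (fun n : ℕ => (n : ℝ)) h
        push_cast at h'; linarith
    -- pointwise quadratic expansion
    have hsq : ∀ (t : ℕ) (ω : Ω),
        ((Q (t + 1) 0 ω : ℝ) + (Q (t + 1) m ω : ℝ)) ^ 2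
          = ((Q t 0 ω : ℝ) + (Q t m ω : ℝ)) ^ 2
            + (((A (t + 1) 0 ω : ℝ) + (A (t + 1) m ω : ℝ))
                - (if 0 < Q t 0 ω + Q t m ω then (1 : ℝ) else 0)) ^ 2
            + 2 * (((Q t 0 ω : ℝ) + (Q t m ω : ℝ))
                * ((A (t + 1) 0 ω : ℝ) + (A (t + 1) m ω : ℝ)))
            - 2 * ((Q t 0 ω : ℝ) + (Q t m ω : ℝ)) := by
      intro t ω
      have hwd : ((Q t 0 ω : ℝ) + (Q t m ω : ℝ))
          * (if 0 < Q t 0 ω + Q t m ω then (1 : ℝ) else 0)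
          = (Q t 0 ω : ℝ) + (Q t m ω : ℝ) := by
        split_ifs with hc
        · ring
        · have h0 : Q t 0 ω = 0 ∧ Q t m ω = 0 := by omega
          simp [h0.1, h0.2]
      rw [hrecR t ω]
      linear_combination (-2 : ℝ) * hwd
    -- independence of arrivals from the current workload
    have hindep : ∀ t : ℕ, IndepFun
        (fun ω => (A (t + 1) 0 ω : ℝ) + (A (t + 1) m ω : ℝ))
        (fun ω => (Q t 0 ω : ℝ) + (Q t m ω : ℝ)) μ := by
      intro t
      have hφ : Measurable fun v : Fin N → ℕ => ((v 0 : ℝ) + (v m : ℝ)) :=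
        (measurable_from_top.comp (measurable_pi_apply 0)).add
          (measurable_from_top.comp (measurable_pi_apply m))
      have hψ : Measurable fun u : Fin (t + 1) → Fin N → ℕ =>
          ((u (Fin.last t) 0 : ℝ) + (u (Fin.last t) m : ℝ)) :=
        (measurable_from_top.comp
            ((measurable_pi_apply (0 : Fin N)).comp (measurable_pi_apply (Fin.last t)))).add
          (measurable_from_top.comp
            ((measurable_pi_apply m).comp (measurable_pi_apply (Fin.last t))))
      exact (hApast t).comp hφ hψ
    -- mean of the aggregate arrivals
    have haSmean : ∀ t : ℕ,
        ∫ ω, ((A (t + 1) 0 ω : ℝ) + (A (t + 1) m ω : ℝ)) ∂μ = lam 0 + lam m := by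
      intro t
      rw [integral_add (hAintR t 0) (hAintR t m), hAmean t 0, hAmean t m]
    -- the drift inequality
    have hdrift : ∀ t : ℕ,
        ∫ ω, ((Q (t + 1) 0 ω : ℝ) + (Q (t + 1) m ω : ℝ)) ^ 2 ∂μ
          + 2 * (1 - (lam 0 + lam m)) * ∫ ω, ((Q t 0 ω : ℝ) + (Q t m ω : ℝ)) ∂μ
          ≤ ∫ ω, ((Q t 0 ω : ℝ) + (Q t m ω : ℝ)) ^ 2 ∂μ + C := by
      intro t
      have hdmeas : Measurable fun ω => (if 0 < Q t 0 ω + Q t m ω then (1 : ℝ) else 0) := by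
        have heq : (fun ω => (if 0 < Q t 0 ω + Q t m ω then (1 : ℝ) else 0))
            = (fun n : ℕ => if 0 < n then (1 : ℝ) else 0) ∘ (fun ω => Q t 0 ω + Q t m ω) := rfl
        rw [heq]
        exact measurable_from_top.comp ((hQmeas t 0).add (hQmeas t m))
      have haSmeas : Measurable fun ω => ((A (t + 1) 0 ω : ℝ) + (A (t + 1) m ω : ℝ)) :=
        (hAR (t + 1) 0).add (hAR (t + 1) m)
      have hadbd : ∀ ω, (((A (t + 1) 0 ω : ℝ) + (A (t + 1) m ω : ℝ))
          - (if 0 < Q t 0 ω + Q t m ω then (1 : ℝ) else 0)) ^ 2 ≤ C := by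
        intro ω
        have ha1 : (0 : ℝ) ≤ (A (t + 1) 0 ω : ℝ) + (A (t + 1) m ω : ℝ) := by positivity
        have ha2 : (A (t + 1) 0 ω : ℝ) + (A (t + 1) m ω : ℝ) ≤ 2 * B := by
          have := hARbd t 0 ω; have := hARbd t m ω; linarith
        have hd1 : (0 : ℝ) ≤ (if 0 < Q t 0 ω + Q t m ω then (1 : ℝ) else 0) := by
          split_ifs <;> norm_num
        have hd2 : (if 0 < Q t 0 ω + Q t m ω then (1 : ℝ) else 0) ≤ 1 := by
          split_ifs <;> norm_num
        have habs : |((A (t + 1) 0 ω : ℝ) + (A (t + 1) m ω : ℝ))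
            - (if 0 < Q t 0 ω + Q t m ω then (1 : ℝ) else 0)| ≤ 2 * B + 1 :=
          abs_le.mpr ⟨by linarith, by linarith⟩
        calc (((A (t + 1) 0 ω : ℝ) + (A (t + 1) m ω : ℝ))
            - (if 0 < Q t 0 ω + Q t m ω then (1 : ℝ) else 0)) ^ 2
            = |((A (t + 1) 0 ω : ℝ) + (A (t + 1) m ω : ℝ))
                - (if 0 < Q t 0 ω + Q t m ω then (1 : ℝ) else 0)| ^ 2 := (sq_abs _).symm
          _ ≤ (2 * B + 1) ^ 2 := by
              exact pow_le_pow_left₀ (abs_nonneg _) habs 2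
      have i1 : Integrable (fun ω => ((Q t 0 ω : ℝ) + (Q t m ω : ℝ)) ^ 2) μ := by
        refine hInt _ ((2 * t * B) ^ 2) ((hWmeas t).pow_const 2) (fun ω => ?_)
        rw [abs_of_nonneg (sq_nonneg _)]
        exact pow_le_pow_left₀ (hWnn t ω) (hWle t ω) 2
      have i2 : Integrable (fun ω => (((A (t + 1) 0 ω : ℝ) + (A (t + 1) m ω : ℝ))
          - (if 0 < Q t 0 ω + Q t m ω then (1 : ℝ) else 0)) ^ 2) μ := by
        refine hInt _ C ((haSmeas.sub hdmeas).pow_const 2) (fun ω => ?_)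
        rw [abs_of_nonneg (sq_nonneg _)]
        exact hadbd ω
      have i3 : Integrable (fun ω => ((Q t 0 ω : ℝ) + (Q t m ω : ℝ))
          * ((A (t + 1) 0 ω : ℝ) + (A (t + 1) m ω : ℝ))) μ := by
        refine hInt _ ((2 * t * B) * (2 * B)) ((hWmeas t).mul haSmeas) (fun ω => ?_)
        rw [abs_mul, abs_of_nonneg (hWnn t ω), abs_of_nonneg (by positivity :
          (0 : ℝ) ≤ (A (t + 1) 0 ω : ℝ) + (A (t + 1) m ω : ℝ))]
        have ha2 : (A (t + 1) 0 ω : ℝ) + (A (t + 1) m ω : ℝ) ≤ 2 * B := by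
          have := hARbd t 0 ω; have := hARbd t m ω; linarith
        exact mul_le_mul (hWle t ω) ha2 (by positivity) (by positivity)
      have i4 : Integrable (fun ω => (Q t 0 ω : ℝ) + (Q t m ω : ℝ)) μ := hWint t
      have e1 : ∫ ω, ((Q (t + 1) 0 ω : ℝ) + (Q (t + 1) m ω : ℝ)) ^ 2 ∂μ
          = ∫ ω, (((Q t 0 ω : ℝ) + (Q t m ω : ℝ)) ^ 2
              + (((A (t + 1) 0 ω : ℝ) + (A (t + 1) m ω : ℝ))
                  - (if 0 < Q t 0 ω + Q t m ω then (1 : ℝ) else 0)) ^ 2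
              + 2 * (((Q t 0 ω : ℝ) + (Q t m ω : ℝ))
                  * ((A (t + 1) 0 ω : ℝ) + (A (t + 1) m ω : ℝ)))
              - 2 * ((Q t 0 ω : ℝ) + (Q t m ω : ℝ))) ∂μ :=
        integral_congr_ae (Eventually.of_forall (fun ω => hsq t ω))
      have i12 : Integrable (fun ω => ((Q t 0 ω : ℝ) + (Q t m ω : ℝ)) ^ 2
          + (((A (t + 1) 0 ω : ℝ) + (A (t + 1) m ω : ℝ))
              - (if 0 < Q t 0 ω + Q t m ω then (1 : ℝ) else 0)) ^ 2) μ := i1.add i2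
      have i3' : Integrable (fun ω => 2 * (((Q t 0 ω : ℝ) + (Q t m ω : ℝ))
          * ((A (t + 1) 0 ω : ℝ) + (A (t + 1) m ω : ℝ)))) μ := i3.const_mul 2
      have i123 : Integrable (fun ω => ((Q t 0 ω : ℝ) + (Q t m ω : ℝ)) ^ 2
          + (((A (t + 1) 0 ω : ℝ) + (A (t + 1) m ω : ℝ))
              - (if 0 < Q t 0 ω + Q t m ω then (1 : ℝ) else 0)) ^ 2
          + 2 * (((Q t 0 ω : ℝ) + (Q t m ω : ℝ))
              * ((A (t + 1) 0 ω : ℝ) + (A (t + 1) m ω : ℝ)))) μ := i12.add i3'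
      have i4' : Integrable (fun ω => 2 * ((Q t 0 ω : ℝ) + (Q t m ω : ℝ))) μ := i4.const_mul 2
      rw [e1, integral_sub i123 i4', integral_add i12 i3', integral_add i1 i2,
        integral_const_mul, integral_const_mul]
      have hprod : ∫ ω, (((Q t 0 ω : ℝ) + (Q t m ω : ℝ))
          * ((A (t + 1) 0 ω : ℝ) + (A (t + 1) m ω : ℝ))) ∂μ
          = (∫ ω, ((Q t 0 ω : ℝ) + (Q t m ω : ℝ)) ∂μ) * (lam 0 + lam m) := by
        have h := (hindep t).symm.integral_mul_eq_mul_integral (hWmeas t).aestronglyMeasurable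
          haSmeas.aestronglyMeasurable
        rw [← haSmean t]
        exact h
      have hIad : ∫ ω, (((A (t + 1) 0 ω : ℝ) + (A (t + 1) m ω : ℝ))
          - (if 0 < Q t 0 ω + Q t m ω then (1 : ℝ) else 0)) ^ 2 ∂μ ≤ C := by
        calc ∫ ω, (((A (t + 1) 0 ω : ℝ) + (A (t + 1) m ω : ℝ))
            - (if 0 < Q t 0 ω + Q t m ω then (1 : ℝ) else 0)) ^ 2 ∂μ
            ≤ ∫ _ω, C ∂μ := integral_mono i2 (integrable_const C) hadbd
          _ = C := by simp [measure_univ]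
      rw [hprod]
      set I := ∫ ω, ((Q t 0 ω : ℝ) + (Q t m ω : ℝ)) ∂μ
      nlinarith [hIad]
    -- summing the drift inequality
    have hsum : ∀ T : ℕ,
        2 * (1 - (lam 0 + lam m))
            * ∑ t ∈ Finset.range T, ∫ ω, ((Q t 0 ω : ℝ) + (Q t m ω : ℝ)) ∂μ
          + ∫ ω, ((Q T 0 ω : ℝ) + (Q T m ω : ℝ)) ^ 2 ∂μ ≤ C * T := by
      intro T
      induction T with
      | zero => simp [hQ0]
      | succ T ih =>
        rw [Finset.sum_range_succ]
        have hd := hdrift T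
        push_cast
        push_cast at ih
        linarith
    intro T
    have hT2 : 0 ≤ ∫ ω, ((Q T 0 ω : ℝ) + (Q T m ω : ℝ)) ^ 2 ∂μ :=
      integral_nonneg (fun ω => sq_nonneg _)
    have hsplit : ∀ t : ℕ, ∫ ω, ((Q t 0 ω : ℝ) + (Q t m ω : ℝ)) ∂μ
        = ∫ ω, (Q t 0 ω : ℝ) ∂μ + ∫ ω, (Q t m ω : ℝ) ∂μ :=
      fun t => integral_add (hQint t 0) (hQint t m)
    have h2 : ∑ t ∈ Finset.range T, (∫ ω, (Q t 0 ω : ℝ) ∂μ + ∫ ω, (Q t m ω : ℝ) ∂μ)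
        = ∑ t ∈ Finset.range T, ∫ ω, ((Q t 0 ω : ℝ) + (Q t m ω : ℝ)) ∂μ :=
      Finset.sum_congr rfl (fun t _ => (hsplit t).symm)
    rw [h2, div_mul_eq_mul_div, le_div_iff₀ (by linarith)]
    nlinarith [hsum T]
  -- total bound
  set K : ℝ := ∑ m ∈ Finset.univ.erase (0 : Fin N),
    (2 * (B : ℝ) + 1) ^ 2 / (2 * (1 - (lam 0 + lam m))) with hKdef
  have hK0 : 0 ≤ K := by
    refine Finset.sum_nonneg (fun m hm => ?_)
    have := hcap m (Finset.ne_of_mem_erase hm)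
    exact div_nonneg (sq_nonneg _) (by linarith)
  have hLbound : ∀ T : ℕ,
      ∑ t ∈ Finset.range T, ∑ m, ∫ ω, (Q t m ω : ℝ) ∂μ ≤ K * T := by
    intro T
    have h1 : ∀ t : ℕ, ∑ m, ∫ ω, (Q t m ω : ℝ) ∂μ
        ≤ ∑ m ∈ Finset.univ.erase (0 : Fin N),
            (∫ ω, (Q t 0 ω : ℝ) ∂μ + ∫ ω, (Q t m ω : ℝ) ∂μ) := by
      intro t
      rw [← Finset.sum_erase_add _ _ (Finset.mem_univ (0 : Fin N)),
        Finset.sum_add_distrib, Finset.sum_const]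
      have hcard : 1 ≤ (Finset.univ.erase (0 : Fin N)).card := by
        rw [Finset.card_erase_of_mem (Finset.mem_univ _), Finset.card_univ, Fintype.card_fin]
        omega
      have hI0 : 0 ≤ ∫ ω, (Q t 0 ω : ℝ) ∂μ := integral_nonneg (fun ω => by positivity)
      have hle : (1 : ℝ) * (∫ ω, (Q t 0 ω : ℝ) ∂μ)
          ≤ ((Finset.univ.erase (0 : Fin N)).card : ℝ) * ∫ ω, (Q t 0 ω : ℝ) ∂μ := by
        apply mul_le_mul_of_nonneg_right _ hI0
        exact_mod_cast hcard
      rw [nsmul_eq_mul]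
      linarith
    calc ∑ t ∈ Finset.range T, ∑ m, ∫ ω, (Q t m ω : ℝ) ∂μ
        ≤ ∑ t ∈ Finset.range T, ∑ m ∈ Finset.univ.erase (0 : Fin N),
            (∫ ω, (Q t 0 ω : ℝ) ∂μ + ∫ ω, (Q t m ω : ℝ) ∂μ) :=
          Finset.sum_le_sum (fun t _ => h1 t)
      _ = ∑ m ∈ Finset.univ.erase (0 : Fin N), ∑ t ∈ Finset.range T,
            (∫ ω, (Q t 0 ω : ℝ) ∂μ + ∫ ω, (Q t m ω : ℝ) ∂μ) := Finset.sum_comm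
      _ ≤ ∑ m ∈ Finset.univ.erase (0 : Fin N),
            (2 * (B : ℝ) + 1) ^ 2 / (2 * (1 - (lam 0 + lam m))) * T :=
          Finset.sum_le_sum (fun m hm => key m (Finset.ne_of_mem_erase hm) T)
      _ = K * T := by rw [hKdef, Finset.sum_mul]
  -- conversion to ℝ≥0∞
  have hconv : ∀ T : ℕ, (∑ t ∈ Finset.range T, ∑ m, ∫⁻ ω, (Q t m ω : ℝ≥0∞) ∂μ)
      = ENNReal.ofReal (∑ t ∈ Finset.range T, ∑ m, ∫ ω, (Q t m ω : ℝ) ∂μ) := by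
    intro T
    rw [ENNReal.ofReal_sum_of_nonneg (fun t _ => Finset.sum_nonneg
      (fun m _ => integral_nonneg (fun ω => by positivity)))]
    refine Finset.sum_congr rfl (fun t _ => ?_)
    rw [ENNReal.ofReal_sum_of_nonneg (fun m _ => integral_nonneg (fun ω => by positivity))]
    refine Finset.sum_congr rfl (fun m _ => ?_)
    rw [ofReal_integral_eq_lintegral_ofReal (hQint t m)
      (Eventually.of_forall (fun ω => by positivity))]
    exact lintegral_congr (fun ω => (ENNReal.ofReal_natCast _).symm)
  have hfinal : ∀ T : ℕ,
      (∑ t ∈ Finset.range T, ∑ m, ∫⁻ ω, (Q t m ω : ℝ≥0∞) ∂μ) / (T : ℝ≥0∞)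
        ≤ ENNReal.ofReal K := by
    intro T
    rcases Nat.eq_zero_or_pos T with hT | hT
    · subst hT; simp
    · have h1 : (∑ t ∈ Finset.range T, ∑ m, ∫⁻ ω, (Q t m ω : ℝ≥0∞) ∂μ)
          ≤ ENNReal.ofReal (K * T) := by
        rw [hconv T]; exact ENNReal.ofReal_le_ofReal (hLbound T)
      have hTne : (T : ℝ≥0∞) ≠ 0 := by exact_mod_cast Nat.pos_iff_ne_zero.mp hT
      have hTtop : (T : ℝ≥0∞) ≠ ⊤ := ENNReal.natCast_ne_top T
      calc (∑ t ∈ Finset.range T, ∑ m, ∫⁻ ω, (Q t m ω : ℝ≥0∞) ∂μ) / (T : ℝ≥0∞)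
          ≤ ENNReal.ofReal (K * T) / (T : ℝ≥0∞) := ENNReal.div_le_div_right h1 _
        _ = ENNReal.ofReal K := by
            rw [ENNReal.ofReal_mul hK0, ENNReal.ofReal_natCast, div_eq_mul_inv,
              mul_assoc, ENNReal.mul_inv_cancel hTne hTtop, mul_one]
  have hlim : limsup (fun T : ℕ =>
      (∑ t ∈ Finset.range T, ∑ m, ∫⁻ ω, (Q t m ω : ℝ≥0∞) ∂μ) / (T : ℝ≥0∞)) atTop
      ≤ ENNReal.ofReal K :=
    limsup_le_of_le (by isBoundedDefault) (Eventually.of_forall hfinal)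
  exact lt_of_le_of_lt hlim ENNReal.ofReal_lt_top
end
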